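/- arXiv:1603.01550 — 3 statements merged into one kernel-verified Lean document; each statement's English description precedes it below -/
import Mathlib

section
/- Any injective monoid homomorphism ξ : M → E which fixes every element of G also fixes every member of Γ ∪ Γ⁺ ∪ Γ⁻ ∪ Γ±, i.e. ξ(g) = g for all g ∈ Γ ∪ Γ⁺ ∪ Γ⁻ ∪ Γ±. -/
/-- The monoid `M` of strictly order-preserving maps `ℚ → ℚ`
(self-embeddings of `(ℚ,<)`), a submonoid of `Tr(ℚ) = Function.End ℚ`. -/
def Mmon : Submonoid (Function.End ℚ) where
  carrier := {f | StrictMono f}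
  mul_mem' := fun hf hg => hf.comp hg
  one_mem' := strictMono_id

/-- The monoid `E` of order-preserving maps `ℚ → ℚ` (endomorphisms of `(ℚ,≤)`),
a submonoid of `Tr(ℚ) = Function.End ℚ`. -/
def Emon : Submonoid (Function.End ℚ) where
  carrier := {f | Monotone f}
  mul_mem' := fun hf hg => hf.comp hg
  one_mem' := monotone_id

/-- `z` lies strictly between `x` and `y`. -/
def StrictlyBetween (x y z : ℚ) : Prop := (x < z ∧ z < y) ∨ (y < z ∧ z < x)

/-- The equivalence relation `∼` associated with `g`: at most one point of `im(g)`
lies strictly between `x` and `y`. -/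
def SimRel (g : ℚ → ℚ) (x y : ℚ) : Prop :=
  {z | z ∈ Set.range g ∧ StrictlyBetween x y z}.Subsingleton

/-- The `∼`-class of `x` is red, i.e. meets `im(g)`. -/
def RedPt (g : ℚ → ℚ) (x : ℚ) : Prop := ∃ y ∈ Set.range g, SimRel g x y

/-- A colouring of `ℚ` in which both colours are dense (this makes `(ℚ, R)` a copy of
the 2-coloured rationals `ℚ₂`, `R q` meaning "`q` is red"). -/
def DenseColouring (R : ℚ → Prop) : Prop :=
  ∀ x y : ℚ, x < y → (∃ z, x < z ∧ z < y ∧ R z) ∧ (∃ z, x < z ∧ z < y ∧ ¬ R z)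

/-- `ℚ` decomposes as a disjoint increasing union of convex subsets `A q`, `q` in the
linearly ordered index set `ι` with red points given by `R`, each `A q` order-isomorphic
to `ℚ`, where `A q` meets `im(f)` in exactly one point if `q` is red and is disjoint from
`im(f)` if `q` is blue. -/
def Decomp (ι : Type) [LinearOrder ι] (R : ι → Prop) (f : ℚ → ℚ) : Prop :=
  ∃ A : ι → Set ℚ,
    (∀ x : ℚ, ∃! q : ι, x ∈ A q) ∧
    (∀ q r : ι, q < r → ∀ a ∈ A q, ∀ b ∈ A r, a < b) ∧
    (∀ q : ι, (A q).OrdConnected) ∧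
    (∀ q : ι, Nonempty ((A q) ≃o ℚ)) ∧
    (∀ q : ι, R q → ∃! y : ℚ, y ∈ A q ∩ Set.range f) ∧
    (∀ q : ι, ¬ R q → A q ∩ Set.range f = ∅)

/-- The family `Γ`. -/
def Gamma (f : ℚ → ℚ) : Prop :=
  StrictMono f ∧ ∃ R : ℚ → Prop, DenseColouring R ∧ Decomp ℚ R f

/-- The family `Γ⁺` (index set `ℚ₂ ∪ {+∞}`, the added point coloured blue). -/
def GammaP (f : ℚ → ℚ) : Prop :=
  StrictMono f ∧ ∃ R : ℚ → Prop, DenseColouring R ∧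
    Decomp (WithTop ℚ) (fun q => ∃ p : ℚ, q = (p : WithTop ℚ) ∧ R p) f

/-- The family `Γ⁻` (index set `ℚ₂ ∪ {−∞}`, the added point coloured blue). -/
def GammaM (f : ℚ → ℚ) : Prop :=
  StrictMono f ∧ ∃ R : ℚ → Prop, DenseColouring R ∧
    Decomp (WithBot ℚ) (fun q => ∃ p : ℚ, q = (p : WithBot ℚ) ∧ R p) f

/-- The family `Γ±` (index set `ℚ₂ ∪ {−∞, +∞}`, the added points coloured blue). -/
def GammaPM (f : ℚ → ℚ) : Prop :=
  StrictMono f ∧ ∃ R : ℚ → Prop, DenseColouring R ∧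
    Decomp (WithBot (WithTop ℚ))
      (fun q => ∃ p : ℚ, q = ((p : WithTop ℚ) : WithBot (WithTop ℚ)) ∧ R p) f

open Function

open Function

/-- Order automorphism of ℚ from a strictly monotone surjection. -/
noncomputable def qAuto (f : ℚ → ℚ) (h1 : StrictMono f) (h2 : Function.Surjective f) :
    ℚ ≃o ℚ := StrictMono.orderIsoOfSurjective f h1 h2

@[simp] lemma qAuto_apply (f h1 h2) (x : ℚ) : qAuto f h1 h2 x = f x := rfl

lemma exists_fix_move (m x : ℚ) (h : x ≠ m) :
    ∃ σ : ℚ ≃o ℚ, σ m = m ∧ σ x ≠ x := by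
  rcases lt_or_gt_of_ne h with hlt | hgt
  · -- x < m : move points below m
    refine ⟨qAuto (fun z => if m ≤ z then z else 2*z - m) ?_ ?_, ?_, ?_⟩
    · intro a b hab
      dsimp only
      by_cases ha : m ≤ a <;> by_cases hb : m ≤ b <;>
        simp [ha, hb] <;> linarith
    · intro y
      by_cases hy : m ≤ y
      · exact ⟨y, by simp [hy]⟩
      · refine ⟨(y+m)/2, ?_⟩
        have : ¬ m ≤ (y+m)/2 := by push_neg at hy ⊢; linarith
        simp only [this, if_false]
        ring
    · show (if m ≤ m then m else 2*m - m) = m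
      simp
    · show (if m ≤ x then x else 2*x - m) ≠ x
      have : ¬ m ≤ x := not_le.mpr hlt
      simp only [this, if_false]
      intro hc
      have : x = m := by linarith
      exact h this
  · refine ⟨qAuto (fun z => if z ≤ m then z else 2*z - m) ?_ ?_, ?_, ?_⟩
    · intro a b hab
      dsimp only
      by_cases ha : a ≤ m <;> by_cases hb : b ≤ m <;>
        simp [ha, hb] <;> linarith
    · intro y
      by_cases hy : y ≤ m
      · exact ⟨y, by simp [hy]⟩
      · refine ⟨(y+m)/2, ?_⟩
        have : ¬ (y+m)/2 ≤ m := by push_neg at hy ⊢; linarith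
        simp only [this, if_false]
        ring
    · show (if m ≤ m then m else 2*m - m) = m
      simp
    · show (if x ≤ m then x else 2*x - m) ≠ x
      have : ¬ x ≤ m := not_le.mpr hgt
      simp only [this, if_false]
      intro hc
      have : x = m := by linarith
      exact h this

lemma exists_move (x : ℚ) : ∃ σ : ℚ ≃o ℚ, σ x ≠ x := by
  refine ⟨qAuto (fun z => z + 1) (fun a b hab => by dsimp; linarith)
    (fun y => ⟨y - 1, by ring⟩), by show x + 1 ≠ x; intro hc; linarith⟩

/-- Shift order iso. -/
noncomputable def shiftIso (c : ℚ) : ℚ ≃o ℚ :=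
  qAuto (fun z => z + c) (fun a b hab => by dsimp; linarith) (fun y => ⟨y - c, by ring⟩)

@[simp] lemma shiftIso_apply (c x : ℚ) : shiftIso c x = x + c := rfl


lemma exists_blockauto {ι : Type} [LinearOrder ι] (A : ι → Set ℚ)
    (huniq : ∀ x : ℚ, ∃! q : ι, x ∈ A q)
    (horder : ∀ q r : ι, q < r → ∀ a ∈ A q, ∀ b ∈ A r, a < b)
    (γ : ι ≃o ι) (ψ : ∀ q : ι, (A q) ≃o (A (γ q))) :
    ∃ a : ℚ → ℚ, StrictMono a ∧ Function.Surjective a ∧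
      ∀ (q : ι) (x : ℚ) (hx : x ∈ A q), a x = (ψ q ⟨x, hx⟩ : ℚ) := by
  choose qof hmem hun using huniq
  set a : ℚ → ℚ := fun x => (ψ (qof x) ⟨x, hmem x⟩ : ℚ) with ha
  have key : ∀ (q : ι) (x : ℚ) (hx : x ∈ A q), a x = (ψ q ⟨x, hx⟩ : ℚ) := by
    intro q x hx
    have h1 : q = qof x := hun x q hx
    subst h1
    rfl
  have hmaps : ∀ x, a x ∈ A (γ (qof x)) := fun x => (ψ (qof x) ⟨x, hmem x⟩).2
  refine ⟨a, ?_, ?_, key⟩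
  · intro x y hxy
    rcases lt_trichotomy (qof x) (qof y) with hlt | heq | hgt
    · exact horder _ _ (γ.strictMono hlt) _ (hmaps x) _ (hmaps y)
    · have hy' : y ∈ A (qof x) := heq ▸ hmem y
      have h2 : a y = (ψ (qof x) ⟨y, hy'⟩ : ℚ) := key _ y hy'
      have h3 : a x = (ψ (qof x) ⟨x, hmem x⟩ : ℚ) := rfl
      rw [h2, h3]
      exact Subtype.coe_lt_coe.mpr ((ψ (qof x)).strictMono (Subtype.mk_lt_mk.mpr hxy))
    · exact absurd (horder _ _ hgt y (hmem y) x (hmem x)) (not_lt.mpr hxy.le)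
  · intro w
    have hw : w ∈ A (γ (γ.symm (qof w))) := by
      rw [γ.apply_symm_apply]; exact hmem w
    refine ⟨((ψ (γ.symm (qof w))).symm ⟨w, hw⟩ : ℚ), ?_⟩
    have hz : ((((ψ (γ.symm (qof w))).symm ⟨w, hw⟩ : A (γ.symm (qof w)))) : ℚ)
        ∈ A (γ.symm (qof w)) := ((ψ (γ.symm (qof w))).symm ⟨w, hw⟩).2
    rw [key _ _ hz]
    have h4 : (⟨(((ψ (γ.symm (qof w))).symm ⟨w, hw⟩ : A (γ.symm (qof w))) : ℚ), hz⟩ :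
        A (γ.symm (qof w))) = (ψ (γ.symm (qof w))).symm ⟨w, hw⟩ := rfl
    rw [h4]
    exact congrArg Subtype.val ((ψ (γ.symm (qof w))).apply_symm_apply ⟨w, hw⟩)

section StepLemmas
variable {ι : Type} [LinearOrder ι]

lemma step1_auto (R' : ι → Prop) (A : ι → Set ℚ)
    (huniq : ∀ x : ℚ, ∃! q : ι, x ∈ A q)
    (horder : ∀ q r : ι, q < r → ∀ a ∈ A q, ∀ b ∈ A r, a < b)
    (hiso : ∀ q : ι, Nonempty ((A q) ≃o ℚ)) (g : ℚ → ℚ)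
    (hred : ∀ q : ι, R' q → ∃! y : ℚ, y ∈ A q ∩ Set.range g)
    (hblue : ∀ q : ι, ¬ R' q → A q ∩ Set.range g = ∅)
    (x : ℚ) (hx : x ∉ Set.range g) :
    ∃ a : ℚ → ℚ, StrictMono a ∧ Function.Surjective a ∧
      (∀ z : ℚ, a (g z) = g z) ∧ a x ≠ x := by
  classical
  obtain ⟨qs, hqs, _⟩ := huniq x
  set φ : ∀ q : ι, (A q) ≃o ℚ := fun q => (hiso q).some with hφ
  have hσ : ∃ σ : ℚ ≃o ℚ, σ (φ qs ⟨x, hqs⟩) ≠ φ qs ⟨x, hqs⟩ ∧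
      ∀ z : A qs, (z : ℚ) ∈ Set.range g → σ (φ qs z) = φ qs z := by
    by_cases hr : R' qs
    · obtain ⟨y, hymem, hyuniq⟩ := hred qs hr
      have hxy : x ≠ y := fun he => hx (he ▸ hymem.2)
      obtain ⟨σ, hσ1, hσ2⟩ := exists_fix_move (φ qs ⟨y, hymem.1⟩) (φ qs ⟨x, hqs⟩)
        (fun he => hxy (congrArg Subtype.val ((φ qs).injective he)))
      refine ⟨σ, hσ2, ?_⟩
      intro z hz
      have h1 : (z : ℚ) = y := hyuniq z ⟨z.2, hz⟩
      have hz' : z = (⟨y, hymem.1⟩ : A qs) := Subtype.ext h1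
      rw [hz', hσ1]
    · obtain ⟨σ, hσ⟩ := exists_move (φ qs ⟨x, hqs⟩)
      refine ⟨σ, hσ, ?_⟩
      intro z hz
      exfalso
      have h1 : (z : ℚ) ∈ A qs ∩ Set.range g := ⟨z.2, hz⟩
      rw [hblue qs hr] at h1
      exact Set.notMem_empty _ h1
  obtain ⟨σ, hσmove, hσfix⟩ := hσ
  set ψ : ∀ q : ι, (A q) ≃o (A ((OrderIso.refl ι) q)) := fun q =>
    (φ q).trans (((if q = qs then σ else OrderIso.refl ℚ)).trans (φ q).symm) with hψ
  obtain ⟨a, ha1, ha2, hkey⟩ := exists_blockauto A huniq horder (OrderIso.refl ι) ψ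
  refine ⟨a, ha1, ha2, ?_, ?_⟩
  · intro z
    obtain ⟨q, hq, _⟩ := huniq (g z)
    rw [hkey q (g z) hq]
    show ((φ q).symm ((if q = qs then σ else OrderIso.refl ℚ) ((φ q) ⟨g z, hq⟩)) : ℚ) = g z
    by_cases he : q = qs
    · subst he
      rw [if_pos rfl, hσfix ⟨g z, hq⟩ ⟨z, rfl⟩, OrderIso.symm_apply_apply]
    · rw [if_neg he]
      simp
  · intro he
    rw [hkey qs x hqs] at he
    have he' : ((φ qs).symm ((if qs = qs then σ else OrderIso.refl ℚ) (φ qs ⟨x, hqs⟩)) : A qs)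
        = ⟨x, hqs⟩ := Subtype.ext he
    rw [if_pos rfl] at he'
    exact hσmove (((φ qs).symm_apply_eq).mp he')

lemma step2_auto (R' : ι → Prop) (A : ι → Set ℚ)
    (huniq : ∀ x : ℚ, ∃! q : ι, x ∈ A q)
    (horder : ∀ q r : ι, q < r → ∀ a ∈ A q, ∀ b ∈ A r, a < b)
    (hiso : ∀ q : ι, Nonempty ((A q) ≃o ℚ)) (g : ℚ → ℚ) (hg : StrictMono g)
    (hred : ∀ q : ι, R' q → ∃! y : ℚ, y ∈ A q ∩ Set.range g)
    (hblue : ∀ q : ι, ¬ R' q → A q ∩ Set.range g = ∅)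
    (H3 : ∀ q0 q1 : ι, R' q0 → R' q1 → q0 ≠ q1 →
      ∃ γ : ι ≃o ι, (∀ q, R' (γ q) ↔ R' q) ∧ γ q0 = q0 ∧ γ q1 ≠ q1)
    (x0 y0 : ℚ) (hne : x0 ≠ y0) :
    ∃ (a c : ℚ → ℚ), StrictMono a ∧ Function.Surjective a ∧ StrictMono c ∧
      Function.Surjective c ∧ (∀ z : ℚ, a (g z) = g (c z)) ∧ c x0 = x0 ∧ c y0 ≠ y0 := by
  classical
  set Y : ∀ q : ι, R' q → ℚ := fun q h => (hred q h).choose with hYdef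
  have hYmem : ∀ q h, Y q h ∈ A q := fun q h => (hred q h).choose_spec.1.1
  have hYrange : ∀ q h, Y q h ∈ Set.range g := fun q h => (hred q h).choose_spec.1.2
  have hYuniq : ∀ q h (z : ℚ), z ∈ A q ∩ Set.range g → z = Y q h :=
    fun q h z hz => (hred q h).choose_spec.2 z hz
  have Ycongr : ∀ {q q' : ι} (_ : q = q') (h : R' q) (h' : R' q'), Y q h = Y q' h' := by
    intro q q' e h h'
    subst e
    rfl
  obtain ⟨q0, hq0, hu0⟩ := huniq (g x0)
  have hr0 : R' q0 := by
    by_contra hb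
    have h1 : g x0 ∈ A q0 ∩ Set.range g := ⟨hq0, ⟨x0, rfl⟩⟩
    rw [hblue q0 hb] at h1
    exact Set.notMem_empty _ h1
  obtain ⟨q1, hq1, hu1⟩ := huniq (g y0)
  have hr1 : R' q1 := by
    by_contra hb
    have h1 : g y0 ∈ A q1 ∩ Set.range g := ⟨hq1, ⟨y0, rfl⟩⟩
    rw [hblue q1 hb] at h1
    exact Set.notMem_empty _ h1
  have e0 : g x0 = Y q0 hr0 := hYuniq q0 hr0 _ ⟨hq0, ⟨x0, rfl⟩⟩
  have e1 : g y0 = Y q1 hr1 := hYuniq q1 hr1 _ ⟨hq1, ⟨y0, rfl⟩⟩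
  have hq01 : q0 ≠ q1 := by
    intro he
    subst he
    exact hne (hg.injective (e0.trans ((Ycongr rfl hr1 hr0).symm.trans e1.symm)))
  obtain ⟨γ, hγcol, hγ0, hγ1⟩ := H3 q0 q1 hr0 hr1 hq01
  set φ : ∀ q : ι, (A q) ≃o ℚ := fun q => (hiso q).some with hφ
  have hψex : ∀ q : ι, ∃ ψq : (A q) ≃o (A (γ q)),
      ∀ h : R' q, (ψq ⟨Y q h, hYmem q h⟩ : ℚ) = Y (γ q) ((hγcol q).mpr h) := by
    intro q
    by_cases h : R' q
    · refine ⟨(φ q).trans ((shiftIso ((φ (γ q)) ⟨Y (γ q) ((hγcol q).mpr h),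
          hYmem (γ q) ((hγcol q).mpr h)⟩ - (φ q) ⟨Y q h, hYmem q h⟩)).trans
          (φ (γ q)).symm), fun h' => ?_⟩
      show ((φ (γ q)).symm ((φ q) ⟨Y q h, hYmem q h⟩ +
          ((φ (γ q)) ⟨Y (γ q) ((hγcol q).mpr h), hYmem (γ q) ((hγcol q).mpr h)⟩
            - (φ q) ⟨Y q h, hYmem q h⟩)) : ℚ) = Y (γ q) ((hγcol q).mpr h)
      have e : (φ q) ⟨Y q h, hYmem q h⟩ +
          ((φ (γ q)) ⟨Y (γ q) ((hγcol q).mpr h), hYmem (γ q) ((hγcol q).mpr h)⟩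
            - (φ q) ⟨Y q h, hYmem q h⟩)
          = (φ (γ q)) ⟨Y (γ q) ((hγcol q).mpr h), hYmem (γ q) ((hγcol q).mpr h)⟩ := by
        ring
      rw [e, OrderIso.symm_apply_apply]
    · exact ⟨(φ q).trans ((shiftIso 0).trans (φ (γ q)).symm), fun h' => absurd h' h⟩
  choose ψ hψY using hψex
  obtain ⟨a, ha1, ha2, hkey⟩ := exists_blockauto A huniq horder γ ψ
  have hYmap : ∀ q (h : R' q), a (Y q h) = Y (γ q) ((hγcol q).mpr h) := by
    intro q h
    rw [hkey q (Y q h) (hYmem q h), hψY q h]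
  have haim : ∀ z : ℚ, ∃ u : ℚ, g u = a (g z) := by
    intro z
    obtain ⟨q, hq, _⟩ := huniq (g z)
    have hr : R' q := by
      by_contra hb
      have h1 : g z ∈ A q ∩ Set.range g := ⟨hq, ⟨z, rfl⟩⟩
      rw [hblue q hb] at h1
      exact Set.notMem_empty _ h1
    have e : g z = Y q hr := hYuniq q hr _ ⟨hq, ⟨z, rfl⟩⟩
    rw [e, hYmap q hr]
    exact hYrange (γ q) ((hγcol q).mpr hr)
  choose c hc using haim
  refine ⟨a, c, ha1, ha2, ?_, ?_, fun z => (hc z).symm, ?_, ?_⟩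
  · intro u v huv
    have h1 : g (c u) < g (c v) := by
      rw [hc u, hc v]
      exact ha1 (hg huv)
    exact (hg.lt_iff_lt).mp h1
  · intro w
    obtain ⟨q, hq, _⟩ := huniq (g w)
    have hr : R' q := by
      by_contra hb
      have h1 : g w ∈ A q ∩ Set.range g := ⟨hq, ⟨w, rfl⟩⟩
      rw [hblue q hb] at h1
      exact Set.notMem_empty _ h1
    have e : g w = Y q hr := hYuniq q hr _ ⟨hq, ⟨w, rfl⟩⟩
    have hr' : R' (γ.symm q) := by
      have h1 := hγcol (γ.symm q)
      rw [γ.apply_symm_apply] at h1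
      exact h1.mp hr
    obtain ⟨z, hz⟩ := hYrange (γ.symm q) hr'
    refine ⟨z, ?_⟩
    apply hg.injective
    rw [hc z, hz, hYmap _ hr', e]
    exact Ycongr (γ.apply_symm_apply q) ((hγcol (γ.symm q)).mpr hr') hr
  · apply hg.injective
    rw [hc x0, e0, hYmap q0 hr0]
    exact Ycongr hγ0 ((hγcol q0).mpr hr0) hr0
  · intro he
    have hgy : g y0 = a (g y0) := by
      rw [← hc y0, he]
    have h2 : a (g y0) ∈ A (γ q1) := by
      rw [e1, hYmap q1 hr1]
      exact hYmem (γ q1) ((hγcol q1).mpr hr1)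
    have h3 : g y0 ∈ A (γ q1) := hgy ▸ h2
    exact hγ1 ((hu1 _ h3).trans (hu1 q1 hq1).symm)

section BackAndForth

variable (R : ℚ → Prop)

/-- A finite partial order- and colour-preserving map, as a finite set of pairs. -/
def GoodSet (s : Finset (ℚ × ℚ)) : Prop :=
  (∀ a ∈ s, (R a.1 ↔ R a.2)) ∧ ∀ a ∈ s, ∀ b ∈ s, (a.1 < b.1 ↔ a.2 < b.2)

lemma pick_colour (hR : DenseColouring R) (u v : ℚ) (h : u < v) (x : ℚ) :
    ∃ z : ℚ, u < z ∧ z < v ∧ (R z ↔ R x) := by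
  by_cases hx : R x
  · obtain ⟨z, h1, h2, h3⟩ := (hR u v h).1
    exact ⟨z, h1, h2, by simp [h3, hx]⟩
  · obtain ⟨z, h1, h2, h3⟩ := (hR u v h).2
    exact ⟨z, h1, h2, by simp [h3, hx]⟩

lemma goodset_swap {s : Finset (ℚ × ℚ)} (hs : GoodSet R s) :
    GoodSet R (s.image Prod.swap) := by
  constructor
  · intro a ha
    obtain ⟨b, hb, rfl⟩ := Finset.mem_image.mp ha
    exact (hs.1 b hb).symm
  · intro a ha b hb
    obtain ⟨a', ha', rfl⟩ := Finset.mem_image.mp ha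
    obtain ⟨b', hb', rfl⟩ := Finset.mem_image.mp hb
    exact (hs.2 a' ha' b' hb').symm

lemma extend_dom (hR : DenseColouring R) (s : Finset (ℚ × ℚ)) (hs : GoodSet R s)
    (x : ℚ) : ∃ t : Finset (ℚ × ℚ), s ⊆ t ∧ GoodSet R t ∧ ∃ y, (x, y) ∈ t := by
  classical
  by_cases hx : ∃ y, (x, y) ∈ s
  · exact ⟨s, Finset.Subset.refl s, hs, hx⟩
  · have hxs : ∀ a ∈ s, a.1 ≠ x := by
      intro a ha he
      exact hx ⟨a.2, by rwa [← he, Prod.mk.eta] ⟩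
    -- find y compatible with all pairs
    have hy : ∃ y : ℚ, (R y ↔ R x) ∧ ∀ a ∈ s, (a.1 < x → a.2 < y) ∧ (x < a.1 → y < a.2) := by
      set lows := (s.filter (fun a => a.1 < x)).image Prod.snd with hlows
      set ups := (s.filter (fun a => x < a.1)).image Prod.snd with hups
      have hlow_mem : ∀ a ∈ s, a.1 < x → a.2 ∈ lows := by
        intro a ha h1
        exact Finset.mem_image.mpr ⟨a, Finset.mem_filter.mpr ⟨ha, h1⟩, rfl⟩
      have hup_mem : ∀ a ∈ s, x < a.1 → a.2 ∈ ups := by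
        intro a ha h1
        exact Finset.mem_image.mpr ⟨a, Finset.mem_filter.mpr ⟨ha, h1⟩, rfl⟩
      have key : ∀ y : ℚ, (∀ q ∈ lows, q < y) → (∀ q ∈ ups, y < q) → (R y ↔ R x) →
          (R y ↔ R x) ∧ ∀ a ∈ s, (a.1 < x → a.2 < y) ∧ (x < a.1 → y < a.2) := by
        intro y h1 h2 h3
        exact ⟨h3, fun a ha => ⟨fun hl => h1 _ (hlow_mem a ha hl),
          fun hu => h2 _ (hup_mem a ha hu)⟩⟩
      by_cases hl : lows.Nonempty <;> by_cases hu : ups.Nonempty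
      · -- both: max of lows < min of ups
        obtain ⟨al, hal, hal2⟩ : ∃ a ∈ s, a.1 < x ∧ a.2 = lows.max' hl := by
          obtain ⟨a, ha, he⟩ := Finset.mem_image.mp (lows.max'_mem hl)
          exact ⟨a, (Finset.mem_filter.mp ha).1, (Finset.mem_filter.mp ha).2, he⟩
        obtain ⟨au, hau, hau2⟩ : ∃ a ∈ s, x < a.1 ∧ a.2 = ups.min' hu := by
          obtain ⟨a, ha, he⟩ := Finset.mem_image.mp (ups.min'_mem hu)
          exact ⟨a, (Finset.mem_filter.mp ha).1, (Finset.mem_filter.mp ha).2, he⟩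
        have hlu : lows.max' hl < ups.min' hu := by
          rw [← hal2.2, ← hau2.2]
          exact (hs.2 al hal au hau).mp (hal2.1.trans hau2.1)
        obtain ⟨y, hy1, hy2, hy3⟩ := pick_colour R hR _ _ hlu x
        exact ⟨y, key y (fun q hq => lt_of_le_of_lt (lows.le_max' q hq) hy1)
          (fun q hq => lt_of_lt_of_le hy2 (ups.min'_le q hq)) hy3⟩
      · -- only lows
        obtain ⟨y, hy1, _, hy3⟩ := pick_colour R hR (lows.max' hl) (lows.max' hl + 1)
          (by linarith) x
        refine ⟨y, key y (fun q hq => lt_of_le_of_lt (lows.le_max' q hq) hy1)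
          (fun q hq => absurd ⟨q, hq⟩ hu) hy3⟩
      · -- only ups
        obtain ⟨y, _, hy2, hy3⟩ := pick_colour R hR (ups.min' hu - 1) (ups.min' hu)
          (by linarith) x
        refine ⟨y, key y (fun q hq => absurd ⟨q, hq⟩ hl)
          (fun q hq => lt_of_lt_of_le hy2 (ups.min'_le q hq)) hy3⟩
      · -- empty
        obtain ⟨y, _, _, hy3⟩ := pick_colour R hR x (x + 1) (by linarith) x
        exact ⟨y, key y (fun q hq => absurd ⟨q, hq⟩ hl)
          (fun q hq => absurd ⟨q, hq⟩ hu) hy3⟩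
    obtain ⟨y, hy1, hy2⟩ := hy
    have tri : ∀ a ∈ s, (x < a.1 ↔ y < a.2) ∧ (a.1 < x ↔ a.2 < y) := by
      intro a ha
      have hne := hxs a ha
      constructor
      · constructor
        · exact fun h1 => (hy2 a ha).2 h1
        · intro h2
          rcases lt_trichotomy x a.1 with h | h | h
          · exact h
          · exact absurd h.symm hne
          · exact absurd ((hy2 a ha).1 h) (lt_asymm h2)
      · constructor
        · exact fun h1 => (hy2 a ha).1 h1
        · intro h2
          rcases lt_trichotomy a.1 x with h | h | h
          · exact h
          · exact absurd h hne
          · exact absurd ((hy2 a ha).2 h) (lt_asymm h2)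
    refine ⟨insert (x, y) s, Finset.subset_insert _ s, ?_, ⟨y, Finset.mem_insert_self _ _⟩⟩
    constructor
    · intro a ha
      rcases Finset.mem_insert.mp ha with rfl | ha'
      · exact hy1.symm
      · exact hs.1 a ha'
    · intro a ha b hb
      rcases Finset.mem_insert.mp ha with rfl | ha' <;>
        rcases Finset.mem_insert.mp hb with rfl | hb'
      · simp
      · exact (tri b hb').1
      · exact (tri a ha').2
      · exact hs.2 a ha' b hb'

lemma extend_ran (hR : DenseColouring R) (s : Finset (ℚ × ℚ)) (hs : GoodSet R s)
    (x : ℚ) : ∃ t : Finset (ℚ × ℚ), s ⊆ t ∧ GoodSet R t ∧ ∃ z, (z, x) ∈ t := by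
  classical
  obtain ⟨t', h1, h2, ⟨y, hy⟩⟩ := extend_dom R hR (s.image Prod.swap) (goodset_swap R hs) x
  refine ⟨t'.image Prod.swap, ?_, goodset_swap R h2, ⟨y, ?_⟩⟩
  · intro a ha
    have : a.swap ∈ s.image Prod.swap := Finset.mem_image.mpr ⟨a, ha, rfl⟩
    have h3 : a.swap ∈ t' := h1 this
    have h4 : a.swap.swap ∈ t'.image Prod.swap := Finset.mem_image.mpr ⟨a.swap, h3, rfl⟩
    rwa [Prod.swap_swap] at h4
  · exact Finset.mem_image.mpr ⟨(x, y), hy, rfl⟩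

lemma extend_both (hR : DenseColouring R) (s : Finset (ℚ × ℚ)) (hs : GoodSet R s)
    (x : ℚ) : ∃ t : Finset (ℚ × ℚ), s ⊆ t ∧ GoodSet R t ∧ (∃ y, (x, y) ∈ t) ∧
      ∃ z, (z, x) ∈ t := by
  obtain ⟨t1, h1, h2, h3⟩ := extend_dom R hR s hs x
  obtain ⟨t2, h4, h5, h6⟩ := extend_ran R hR t1 h2 x
  obtain ⟨y, hy⟩ := h3
  exact ⟨t2, h1.trans h4, h5, ⟨y, h4 hy⟩, h6⟩

/-- The increasing chain of finite partial isomorphisms. -/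
noncomputable def bfChain (hR : DenseColouring R) (s0 : Finset (ℚ × ℚ)) (h0 : GoodSet R s0)
    (enum : ℕ → ℚ) : ℕ → {s : Finset (ℚ × ℚ) // GoodSet R s}
  | 0 => ⟨s0, h0⟩
  | n + 1 =>
    ⟨(extend_both R hR (bfChain hR s0 h0 enum n).1 (bfChain hR s0 h0 enum n).2
        (enum n)).choose,
      (extend_both R hR (bfChain hR s0 h0 enum n).1 (bfChain hR s0 h0 enum n).2
        (enum n)).choose_spec.2.1⟩

lemma bfChain_succ_subset (hR : DenseColouring R) (s0 : Finset (ℚ × ℚ))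
    (h0 : GoodSet R s0) (enum : ℕ → ℚ) (n : ℕ) :
    ((bfChain R hR s0 h0 enum n).1 : Finset (ℚ × ℚ)) ⊆ (bfChain R hR s0 h0 enum (n+1)).1 :=
  (extend_both R hR (bfChain R hR s0 h0 enum n).1 (bfChain R hR s0 h0 enum n).2
    (enum n)).choose_spec.1

lemma bfChain_subset (hR : DenseColouring R) (s0 : Finset (ℚ × ℚ))
    (h0 : GoodSet R s0) (enum : ℕ → ℚ) {m n : ℕ} (h : m ≤ n) :
    ((bfChain R hR s0 h0 enum m).1 : Finset (ℚ × ℚ)) ⊆ (bfChain R hR s0 h0 enum n).1 := by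
  induction n with
  | zero => rw [Nat.le_zero.mp h]
  | succ n ih =>
    rcases Nat.lt_or_ge m (n+1) with h1 | h1
    · exact (ih (Nat.lt_succ_iff.mp h1)).trans (bfChain_succ_subset R hR s0 h0 enum n)
    · rw [Nat.le_antisymm h h1]

lemma bfChain_mem_dom (hR : DenseColouring R) (s0 : Finset (ℚ × ℚ))
    (h0 : GoodSet R s0) (enum : ℕ → ℚ) (n : ℕ) :
    ∃ y, (enum n, y) ∈ (bfChain R hR s0 h0 enum (n+1)).1 :=
  (extend_both R hR (bfChain R hR s0 h0 enum n).1 (bfChain R hR s0 h0 enum n).2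
    (enum n)).choose_spec.2.2.1

lemma bfChain_mem_ran (hR : DenseColouring R) (s0 : Finset (ℚ × ℚ))
    (h0 : GoodSet R s0) (enum : ℕ → ℚ) (n : ℕ) :
    ∃ z, (z, enum n) ∈ (bfChain R hR s0 h0 enum (n+1)).1 :=
  (extend_both R hR (bfChain R hR s0 h0 enum n).1 (bfChain R hR s0 h0 enum n).2
    (enum n)).choose_spec.2.2.2

/-- Back and forth: a colour preserving automorphism through prescribed data. -/
lemma colourAuto (hR : DenseColouring R) (s0 : Finset (ℚ × ℚ)) (h0 : GoodSet R s0) :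
    ∃ β : ℚ ≃o ℚ, (∀ p : ℚ, R (β p) ↔ R p) ∧ ∀ a ∈ s0, β a.1 = a.2 := by
  classical
  obtain ⟨enum, henum⟩ := exists_surjective_nat ℚ
  set C := bfChain R hR s0 h0 enum with hC
  -- the union relation
  have hfun : ∀ {x y y' : ℚ}, (∃ n, (x, y) ∈ (C n).1) → (∃ n, (x, y') ∈ (C n).1) → y = y' := by
    rintro x y y' ⟨n, hn⟩ ⟨m, hm⟩
    have h1 : (x, y) ∈ (C (max n m)).1 := bfChain_subset R hR s0 h0 enum (le_max_left n m) hn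
    have h2 : (x, y') ∈ (C (max n m)).1 := bfChain_subset R hR s0 h0 enum (le_max_right n m) hm
    have h3 := (C (max n m)).2.2 _ h1 _ h2
    have h4 := (C (max n m)).2.2 _ h2 _ h1
    simp only [lt_self_iff_false, false_iff, not_lt] at h3 h4
    exact le_antisymm h4 h3
  have htot : ∀ x : ℚ, ∃ y, ∃ n, (x, y) ∈ (C n).1 := by
    intro x
    obtain ⟨n, rfl⟩ := henum x
    obtain ⟨y, hy⟩ := bfChain_mem_dom R hR s0 h0 enum n
    exact ⟨y, n + 1, hy⟩
  choose β₀ hβ₀ using htot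
  have hmono : StrictMono β₀ := by
    intro u v huv
    obtain ⟨n, hn⟩ := hβ₀ u
    obtain ⟨m, hm⟩ := hβ₀ v
    have h1 : (u, β₀ u) ∈ (C (max n m)).1 := bfChain_subset R hR s0 h0 enum (le_max_left n m) hn
    have h2 : (v, β₀ v) ∈ (C (max n m)).1 := bfChain_subset R hR s0 h0 enum (le_max_right n m) hm
    exact ((C (max n m)).2.2 _ h1 _ h2).mp huv
  have hsurj : Function.Surjective β₀ := by
    intro w
    obtain ⟨n, rfl⟩ := henum w
    obtain ⟨z, hz⟩ := bfChain_mem_ran R hR s0 h0 enum n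
    exact ⟨z, hfun ⟨n + 1, hz⟩ (hβ₀ z) ▸ rfl⟩
  refine ⟨qAuto β₀ hmono hsurj, ?_, ?_⟩
  · intro p
    obtain ⟨n, hn⟩ := hβ₀ p
    exact ((C n).2.1 _ hn).symm
  · intro a ha
    have h1 : (a.1, a.2) ∈ (C 0).1 := ha
    exact (hfun (hβ₀ a.1) ⟨0, h1⟩)

end BackAndForth

lemma myTopCoe {α : Type} [PartialOrder α] (e : α ≃o α) (x : α) :
    e.withTopCongr (x : WithTop α) = ((e x : α) : WithTop α) := rfl

lemma myTopTop {α : Type} [PartialOrder α] (e : α ≃o α) :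
    e.withTopCongr (⊤ : WithTop α) = ⊤ := rfl

lemma myBotCoe {α : Type} [PartialOrder α] (e : α ≃o α) (x : α) :
    e.withBotCongr (x : WithBot α) = ((e x : α) : WithBot α) := rfl

lemma myBotBot {α : Type} [PartialOrder α] (e : α ≃o α) :
    e.withBotCongr (⊥ : WithBot α) = ⊥ := rfl

lemma colour_fix_move (R : ℚ → Prop) (hR : DenseColouring R) (p0 p1 : ℚ) (hne : p0 ≠ p1) :
    ∃ β : ℚ ≃o ℚ, (∀ p : ℚ, R (β p) ↔ R p) ∧ β p0 = p0 ∧ β p1 ≠ p1 := by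
  classical
  have hmain : ∀ t : ℚ, t ≠ p1 → (R t ↔ R p1) → ((p0 < p1 ↔ p0 < t) ∧ (p1 < p0 ↔ t < p0)) →
      ∃ β : ℚ ≃o ℚ, (∀ p : ℚ, R (β p) ↔ R p) ∧ β p0 = p0 ∧ β p1 ≠ p1 := by
    intro t ht hcol hord
    have h0 : GoodSet R ({(p0, p0), (p1, t)} : Finset (ℚ × ℚ)) := by
      constructor
      · intro a ha
        rcases Finset.mem_insert.mp ha with rfl | ha'
        · rfl
        · rw [Finset.mem_singleton.mp ha']
          exact hcol.symm
      · intro a ha b hb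
        rcases Finset.mem_insert.mp ha with rfl | ha'
        · rcases Finset.mem_insert.mp hb with rfl | hb'
          · simp
          · rw [Finset.mem_singleton.mp hb']
            exact hord.1
        · rw [Finset.mem_singleton.mp ha']
          rcases Finset.mem_insert.mp hb with rfl | hb'
          · exact hord.2
          · rw [Finset.mem_singleton.mp hb']
            simp
    obtain ⟨β, h1, h2⟩ := colourAuto R hR _ h0
    refine ⟨β, h1, ?_, ?_⟩
    · exact h2 (p0, p0) (Finset.mem_insert_self _ _)
    · have h3 : β p1 = t := h2 (p1, t) (Finset.mem_insert.mpr (Or.inr (Finset.mem_singleton_self _)))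
      rw [h3]
      exact ht
  rcases lt_or_gt_of_ne hne with hlt | hgt
  · obtain ⟨t, ht1, _, ht3⟩ := pick_colour R hR p1 (p1 + 1) (by linarith) p1
    exact hmain t (by linarith) ht3 ⟨by constructor <;> intro <;> linarith,
      by constructor <;> intro <;> linarith⟩
  · obtain ⟨t, _, ht2, ht3⟩ := pick_colour R hR (p1 - 1) p1 (by linarith) p1
    exact hmain t (by linarith) ht3 ⟨by constructor <;> intro <;> linarith,
      by constructor <;> intro <;> linarith⟩

lemma H3_rat (R : ℚ → Prop) (hR : DenseColouring R) :
    ∀ q0 q1 : ℚ, R q0 → R q1 → q0 ≠ q1 →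
      ∃ γ : ℚ ≃o ℚ, (∀ q, R (γ q) ↔ R q) ∧ γ q0 = q0 ∧ γ q1 ≠ q1 := by
  intro q0 q1 _ _ hne
  exact colour_fix_move R hR q0 q1 hne

lemma H3_top (R : ℚ → Prop) (hR : DenseColouring R) :
    ∀ q0 q1 : WithTop ℚ, (∃ p : ℚ, q0 = (p : WithTop ℚ) ∧ R p) →
      (∃ p : ℚ, q1 = (p : WithTop ℚ) ∧ R p) → q0 ≠ q1 →
      ∃ γ : WithTop ℚ ≃o WithTop ℚ,
        (∀ q, (∃ p : ℚ, γ q = (p : WithTop ℚ) ∧ R p) ↔ (∃ p : ℚ, q = (p : WithTop ℚ) ∧ R p)) ∧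
        γ q0 = q0 ∧ γ q1 ≠ q1 := by
  rintro q0 q1 ⟨p0, rfl, hp0⟩ ⟨p1, rfl, hp1⟩ hne
  have hne' : p0 ≠ p1 := fun h => hne (by rw [h])
  obtain ⟨β, h1, h2, h3⟩ := colour_fix_move R hR p0 p1 hne'
  refine ⟨β.withTopCongr, ?_, ?_, ?_⟩
  · intro q
    induction q using WithTop.recTopCoe with
    | top =>
      rw [myTopTop]
    | coe p =>
      rw [myTopCoe]
      constructor
      · rintro ⟨p', hp', hRp'⟩
        exact ⟨p, rfl, (h1 p).mp (by rwa [WithTop.coe_inj.mp hp'])⟩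
      · rintro ⟨p', hp', hRp'⟩
        refine ⟨β p, rfl, ?_⟩
        rw [h1 p, WithTop.coe_inj.mp hp']
        exact hRp'
  · rw [myTopCoe, h2]
  · rw [myTopCoe]
    intro hcontra
    exact h3 (WithTop.coe_inj.mp hcontra)

lemma H3_bot (R : ℚ → Prop) (hR : DenseColouring R) :
    ∀ q0 q1 : WithBot ℚ, (∃ p : ℚ, q0 = (p : WithBot ℚ) ∧ R p) →
      (∃ p : ℚ, q1 = (p : WithBot ℚ) ∧ R p) → q0 ≠ q1 →
      ∃ γ : WithBot ℚ ≃o WithBot ℚ,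
        (∀ q, (∃ p : ℚ, γ q = (p : WithBot ℚ) ∧ R p) ↔ (∃ p : ℚ, q = (p : WithBot ℚ) ∧ R p)) ∧
        γ q0 = q0 ∧ γ q1 ≠ q1 := by
  rintro q0 q1 ⟨p0, rfl, hp0⟩ ⟨p1, rfl, hp1⟩ hne
  have hne' : p0 ≠ p1 := fun h => hne (by rw [h])
  obtain ⟨β, h1, h2, h3⟩ := colour_fix_move R hR p0 p1 hne'
  refine ⟨β.withBotCongr, ?_, ?_, ?_⟩
  · intro q
    induction q using WithBot.recBotCoe with
    | bot =>
      rw [myBotBot]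
    | coe p =>
      rw [myBotCoe]
      constructor
      · rintro ⟨p', hp', hRp'⟩
        exact ⟨p, rfl, (h1 p).mp (by rwa [WithBot.coe_inj.mp hp'])⟩
      · rintro ⟨p', hp', hRp'⟩
        refine ⟨β p, rfl, ?_⟩
        rw [h1 p, WithBot.coe_inj.mp hp']
        exact hRp'
  · rw [myBotCoe, h2]
  · rw [myBotCoe]
    intro hcontra
    exact h3 (WithBot.coe_inj.mp hcontra)

lemma H3_botTop (R : ℚ → Prop) (hR : DenseColouring R) :
    ∀ q0 q1 : WithBot (WithTop ℚ),
      (∃ p : ℚ, q0 = ((p : WithTop ℚ) : WithBot (WithTop ℚ)) ∧ R p) →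
      (∃ p : ℚ, q1 = ((p : WithTop ℚ) : WithBot (WithTop ℚ)) ∧ R p) → q0 ≠ q1 →
      ∃ γ : WithBot (WithTop ℚ) ≃o WithBot (WithTop ℚ),
        (∀ q, (∃ p : ℚ, γ q = ((p : WithTop ℚ) : WithBot (WithTop ℚ)) ∧ R p) ↔
          (∃ p : ℚ, q = ((p : WithTop ℚ) : WithBot (WithTop ℚ)) ∧ R p)) ∧
        γ q0 = q0 ∧ γ q1 ≠ q1 := by
  rintro q0 q1 ⟨p0, rfl, hp0⟩ ⟨p1, rfl, hp1⟩ hne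
  have hne' : p0 ≠ p1 := fun h => hne (by rw [h])
  obtain ⟨β, h1, h2, h3⟩ := colour_fix_move R hR p0 p1 hne'
  refine ⟨(β.withTopCongr).withBotCongr, ?_, ?_, ?_⟩
  · intro q
    induction q using WithBot.recBotCoe with
    | bot =>
      rw [myBotBot]
    | coe w =>
      rw [myBotCoe]
      induction w using WithTop.recTopCoe with
      | top =>
        rw [myTopTop]
      | coe p =>
        rw [myTopCoe]
        constructor
        · rintro ⟨p', hp', hRp'⟩
          have he : β p = p' := WithTop.coe_inj.mp (WithBot.coe_inj.mp hp')
          exact ⟨p, rfl, (h1 p).mp (by rwa [he])⟩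
        · rintro ⟨p', hp', hRp'⟩
          refine ⟨β p, rfl, ?_⟩
          have he : p = p' := WithTop.coe_inj.mp (WithBot.coe_inj.mp hp')
          rw [h1 p, he]
          exact hRp'
  · rw [myBotCoe, myTopCoe, h2]
  · rw [myBotCoe, myTopCoe]
    intro hcontra
    exact h3 (WithTop.coe_inj.mp (WithBot.coe_inj.mp hcontra))

lemma main_abstract {ι : Type} [LinearOrder ι] (R' : ι → Prop)
    (ξ : Mmon →* Emon)
    (hfix : ∀ f : Mmon, Function.Bijective (f : Function.End ℚ) →
      (ξ f : Function.End ℚ) = (f : Function.End ℚ))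
    (g : Mmon) (hdec : Decomp ι R' (g : Function.End ℚ))
    (H3 : ∀ q0 q1 : ι, R' q0 → R' q1 → q0 ≠ q1 →
      ∃ γ : ι ≃o ι, (∀ q, R' (γ q) ↔ R' q) ∧ γ q0 = q0 ∧ γ q1 ≠ q1) :
    (ξ g : Function.End ℚ) = (g : Function.End ℚ) := by
  obtain ⟨A, huniq, horder, _, hiso, hred, hblue⟩ := hdec
  have hg : StrictMono (g : Function.End ℚ) := g.2
  set gf : ℚ → ℚ := (g : Function.End ℚ) with hgf
  set h : ℚ → ℚ := ((ξ g : Emon) : Function.End ℚ) with hh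
  have him : ∀ z : ℚ, h z ∈ Set.range gf := by
    intro z
    by_contra hz
    obtain ⟨a, ha1, ha2, hafix, hamove⟩ :=
      step1_auto R' A huniq horder hiso gf hred hblue (h z) hz
    set ah : Mmon := ⟨a, ha1⟩ with hah
    have heq : ah * g = g := Subtype.ext (funext fun w => hafix w)
    have h2 := congrArg ξ heq
    rw [map_mul] at h2
    have h3 : ξ ah = (⟨a, ha1.monotone⟩ : Emon) :=
      Subtype.ext (hfix ah ⟨ha1.injective, ha2⟩)
    rw [h3] at h2
    have h5 : a (h z) = h z := congrFun (congrArg Subtype.val h2) z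
    exact hamove h5
  have him' : ∀ z : ℚ, ∃ u : ℚ, gf u = h z := fun z => him z
  choose b hb using him'
  have hbid : ∀ x : ℚ, b x = x := by
    by_contra hx
    push_neg at hx
    obtain ⟨x0, hx0⟩ := hx
    obtain ⟨a, c, ha1, ha2, hc1, hc2, hrel, hcx0, hcy0⟩ :=
      step2_auto R' A huniq horder hiso gf hg hred hblue H3 x0 (b x0) (Ne.symm hx0)
    set ah : Mmon := ⟨a, ha1⟩ with hah
    set ch : Mmon := ⟨c, hc1⟩ with hch
    have heq : ah * g = g * ch := Subtype.ext (funext fun w => hrel w)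
    have h2 := congrArg ξ heq
    rw [map_mul, map_mul] at h2
    have ha' : ξ ah = (⟨a, ha1.monotone⟩ : Emon) :=
      Subtype.ext (hfix ah ⟨ha1.injective, ha2⟩)
    have hc' : ξ ch = (⟨c, hc1.monotone⟩ : Emon) :=
      Subtype.ext (hfix ch ⟨hc1.injective, hc2⟩)
    rw [ha', hc'] at h2
    have hpt : ∀ w : ℚ, a (h w) = h (c w) := fun w => congrFun (congrArg Subtype.val h2) w
    have hcomm : ∀ w : ℚ, c (b w) = b (c w) := by
      intro w
      apply hg.injective
      calc gf (c (b w)) = a (gf (b w)) := (hrel (b w)).symm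
        _ = a (h w) := by rw [hb w]
        _ = h (c w) := hpt w
        _ = gf (b (c w)) := (hb (c w)).symm
    have hfin : c (b x0) = b x0 := by rw [hcomm x0, hcx0]
    exact hcy0 hfin
  funext z
  have : h z = gf z := by rw [← hb z, hbid z]
  exact this

/-- **Lemma 2.2.** Any injective monoid homomorphism `ξ : M → E` which fixes every
element of `G = Aut(ℚ,<)` (the invertible members of `M`) pointwise also fixes every
member of `Γ ∪ Γ⁺ ∪ Γ⁻ ∪ Γ±`. -/
theorem fixes_Gamma_of_fixes_G (ξ : Mmon →* Emon) (hinj : Function.Injective ξ)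
    (hfix : ∀ f : Mmon, Function.Bijective (f : Function.End ℚ) →
      (ξ f : Function.End ℚ) = (f : Function.End ℚ))
    (g : Mmon)
    (hg : Gamma (g : Function.End ℚ) ∨ GammaP (g : Function.End ℚ) ∨
      GammaM (g : Function.End ℚ) ∨ GammaPM (g : Function.End ℚ)) :
    (ξ g : Function.End ℚ) = (g : Function.End ℚ) := by
  rcases hg with ⟨_, R, hR, hdec⟩ | ⟨_, R, hR, hdec⟩ | ⟨_, R, hR, hdec⟩ | ⟨_, R, hR, hdec⟩
  · exact main_abstract R ξ hfix g hdec (H3_rat R hR)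
  · exact main_abstract _ ξ hfix g hdec (H3_top R hR)
  · exact main_abstract _ ξ hfix g hdec (H3_bot R hR)
  · exact main_abstract _ ξ hfix g hdec (H3_botTop R hR)
end StepLemmas
end

section
/- If g₁ and g₂ both lie in Γ, then the composite g₂ ∘ g₁ also lies in Γ; the analogous statements hold for Γ⁺, Γ⁻ and Γ±. -/
namespace GComp

variable {ι : Type} [LinearOrder ι]

/-- `s` lies in the closed interval spanned by `a` and `b`. -/
def btw (a b s : ι) : Prop := (a ≤ s ∧ s ≤ b) ∨ (b ≤ s ∧ s ≤ a)

lemma btw_iff {a b s : ι} : btw a b s ↔ min a b ≤ s ∧ s ≤ max a b := by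
  constructor
  · rintro (⟨h1, h2⟩ | ⟨h1, h2⟩)
    · exact ⟨le_trans (min_le_left _ _) h1, le_trans h2 (le_max_right _ _)⟩
    · exact ⟨le_trans (min_le_right _ _) h1, le_trans h2 (le_max_left _ _)⟩
  · rintro ⟨h1, h2⟩
    rcases le_total a b with h | h
    · exact Or.inl ⟨by simpa [min_eq_left h] using h1, by simpa [max_eq_right h] using h2⟩
    · exact Or.inr ⟨by simpa [min_eq_right h] using h1, by simpa [max_eq_left h] using h2⟩

lemma btw_left (a b : ι) : btw a b a := by
  rcases le_total a b with h | h
  · exact Or.inl ⟨le_rfl, h⟩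
  · exact Or.inr ⟨h, le_rfl⟩

lemma btw_right (a b : ι) : btw a b b := by
  rcases le_total a b with h | h
  · exact Or.inl ⟨h, le_rfl⟩
  · exact Or.inr ⟨le_rfl, h⟩

lemma btw_symm {a b s : ι} (h : btw a b s) : btw b a s := h.symm

lemma btw_of_le {a b s : ι} (h1 : a ≤ s) (h2 : s ≤ b) : btw a b s := Or.inl ⟨h1, h2⟩

lemma btw_trans {a b x y s : ι} (hx : btw a b x) (hy : btw a b y) (hs : btw x y s) :
    btw a b s := by
  rw [btw_iff] at *
  exact ⟨le_trans (le_min hx.1 hy.1) hs.1, le_trans hs.2 (max_le hx.2 hy.2)⟩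

/-- the set of `P`-points is densely ordered in itself -/
def PDense (P : ι → Prop) : Prop := ∀ u v, P u → P v → u < v → ∃ w, P w ∧ u < w ∧ w < v

/-- at most one `P`-point in the closed interval spanned by `a`, `b`. -/
def crel (P : ι → Prop) (a b : ι) : Prop :=
  ∀ s t, btw a b s → btw a b t → P s → P t → s = t

lemma crel_refl (P : ι → Prop) (a : ι) : crel P a a := by
  intro s t hs ht _ _
  rcases hs with ⟨h1, h2⟩ | ⟨h1, h2⟩ <;> rcases ht with ⟨h3, h4⟩ | ⟨h3, h4⟩ <;>
    rw [le_antisymm h2 h1, le_antisymm h4 h3]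

lemma crel_symm {P : ι → Prop} {a b : ι} (h : crel P a b) : crel P b a := by
  intro s t hs ht; exact h s t (btw_symm hs) (btw_symm ht)

lemma crel_sub {P : ι → Prop} {a b a' b' : ι} (hA : btw a b a') (hB : btw a b b')
    (h : crel P a b) : crel P a' b' := by
  intro s t hs ht; exact h s t (btw_trans hA hB hs) (btw_trans hA hB ht)

lemma btw_cover {a b c u : ι} (h : btw a c u) : btw a b u ∨ btw b c u := by
  rw [btw_iff] at h
  rcases le_total u b with hub | hbu
  · rcases le_total a c with hac | hca
    · have hau : a ≤ u := by simpa [min_eq_left hac] using h.1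
      exact Or.inl (btw_iff.2 ⟨le_trans (min_le_left _ _) hau,
        le_trans hub (le_max_right _ _)⟩)
    · have hcu : c ≤ u := by simpa [min_eq_right hca] using h.1
      exact Or.inr (btw_iff.2 ⟨le_trans (min_le_right _ _) hcu,
        le_trans hub (le_max_left _ _)⟩)
  · rcases le_total a c with hac | hca
    · have huc : u ≤ c := by simpa [max_eq_right hac] using h.2
      exact Or.inr (btw_iff.2 ⟨le_trans (min_le_left _ _) hbu,
        le_trans huc (le_max_right _ _)⟩)
    · have hua : u ≤ a := by simpa [max_eq_left hca] using h.2
      exact Or.inl (btw_iff.2 ⟨le_trans (min_le_right _ _) hbu,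
        le_trans hua (le_max_left _ _)⟩)

lemma crel_trans {P : ι → Prop} (hd : PDense P) {a b c : ι}
    (h1 : crel P a b) (h2 : crel P b c) : crel P a c := by
  have key : ∀ s t : ι, s < t → btw a c s → btw a c t → P s → P t → False := by
    intro s t hst hs ht Ps Pt
    rcases btw_cover (b := b) hs with hs' | hs' <;> rcases btw_cover (b := b) ht with ht' | ht'
    · exact absurd (h1 s t hs' ht' Ps Pt) (ne_of_lt hst)
    · obtain ⟨w, Pw, hsw, hwt⟩ := hd s t Ps Pt hst
      have hw : btw a c w := btw_trans hs ht (btw_of_le hsw.le hwt.le)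
      rcases btw_cover (b := b) hw with hw' | hw'
      · exact absurd (h1 s w hs' hw' Ps Pw) (ne_of_lt hsw)
      · exact absurd (h2 w t hw' ht' Pw Pt) (ne_of_lt hwt)
    · obtain ⟨w, Pw, hsw, hwt⟩ := hd s t Ps Pt hst
      have hw : btw a c w := btw_trans hs ht (btw_of_le hsw.le hwt.le)
      rcases btw_cover (b := b) hw with hw' | hw'
      · exact absurd (h1 w t hw' ht' Pw Pt) (ne_of_lt hwt)
      · exact absurd (h2 s w hs' hw' Ps Pw) (ne_of_lt hsw)
    · exact absurd (h2 s t hs' ht' Ps Pt) (ne_of_lt hst)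
  intro s t hs ht Ps Pt
  rcases lt_trichotomy s t with h | h | h
  · exact absurd (key s t h hs ht Ps Pt) not_false
  · exact h
  · exact absurd (key t s h ht hs Pt Ps) not_false

variable (P : ι → Prop)

/-- The setoid whose classes are the maximal convex sets containing at most one `P`-point
(a `P`-point together with the `P`-free stretches on either side of it, or a maximal
`P`-free convex stretch). -/
def cstd (hd : PDense P) : Setoid ι :=
  ⟨crel P, ⟨crel_refl P, crel_symm, fun h1 h2 => crel_trans hd h1 h2⟩⟩

variable {P : ι → Prop}

/-- The quotient: the set of classes. -/
def CQ (hd : PDense P) : Type := Quotient (cstd P hd)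

def qk (hd : PDense P) (a : ι) : CQ hd := Quotient.mk (cstd P hd) a

lemma qk_surjective (hd : PDense P) : Function.Surjective (qk hd) := Quotient.exists_rep

lemma qk_eq_iff (hd : PDense P) {a b : ι} : qk hd a = qk hd b ↔ crel P a b :=
  ⟨Quotient.exact, fun h => Quotient.sound (s := cstd P hd) h⟩

lemma rle_congr_aux (hd : PDense P) {a b a' b' : ι} (haa : crel P a a') (hbb : crel P b b')
    (h : a ≤ b ∨ crel P a b) : a' ≤ b' ∨ crel P a' b' := by
  rcases h with hab | hab
  · by_cases hc : crel P a' b'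
    · exact Or.inr hc
    · left
      by_contra hlt
      push_neg at hlt
      apply hc
      have key : crel P b' a' := by
        intro s t hs ht Ps Pt
        have cover : ∀ u : ι, btw b' a' u → btw b b' u ∨ btw a a' u := by
          intro u hu
          rw [btw_iff, min_eq_left hlt.le, max_eq_right hlt.le] at hu
          rcases le_total u b with hub | hbu
          · exact Or.inl (btw_iff.2 ⟨le_trans (min_le_right _ _) hu.1,
              le_trans hub (le_max_left _ _)⟩)
          · exact Or.inr (btw_iff.2 ⟨le_trans (min_le_left _ _) (le_trans hab hbu),
              le_trans hu.2 (le_max_right _ _)⟩)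
        have key2 : ∀ s t : ι, s < t → btw b' a' s → btw b' a' t → P s → P t → False := by
          intro s t hst hs ht Ps Pt
          rcases cover s hs with hs' | hs' <;> rcases cover t ht with ht' | ht'
          · exact absurd (hbb s t hs' ht' Ps Pt) (ne_of_lt hst)
          · obtain ⟨w, Pw, hsw, hwt⟩ := hd s t Ps Pt hst
            have hw : btw b' a' w := btw_trans hs ht (btw_of_le hsw.le hwt.le)
            rcases cover w hw with hw' | hw'
            · exact absurd (hbb s w hs' hw' Ps Pw) (ne_of_lt hsw)
            · exact absurd (haa w t hw' ht' Pw Pt) (ne_of_lt hwt)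
          · obtain ⟨w, Pw, hsw, hwt⟩ := hd s t Ps Pt hst
            have hw : btw b' a' w := btw_trans hs ht (btw_of_le hsw.le hwt.le)
            rcases cover w hw with hw' | hw'
            · exact absurd (hbb w t hw' ht' Pw Pt) (ne_of_lt hwt)
            · exact absurd (haa s w hs' hw' Ps Pw) (ne_of_lt hsw)
          · exact absurd (haa s t hs' ht' Ps Pt) (ne_of_lt hst)
        rcases lt_trichotomy s t with h | h | h
        · exact absurd (key2 s t h hs ht Ps Pt) not_false
        · exact h
        · exact absurd (key2 t s h ht hs Pt Ps) not_false
      exact crel_symm key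
  · exact Or.inr (crel_trans hd (crel_trans hd (crel_symm haa) hab) hbb)

/-- The linear order on classes. -/
noncomputable def cLO (hd : PDense P) : LinearOrder (CQ hd) where
  le := Quotient.lift₂ (fun a b => a ≤ b ∨ crel P a b)
    (by
      intro a b a' b' haa hbb
      exact propext ⟨rle_congr_aux hd haa hbb,
        rle_congr_aux hd (crel_symm haa) (crel_symm hbb)⟩)
  le_refl := by
    rintro ⟨a⟩
    exact Or.inr (crel_refl P a)
  le_trans := by
    rintro ⟨a⟩ ⟨b⟩ ⟨c⟩ (hab | hab) (hbc | hbc)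
    · exact Or.inl (le_trans hab hbc)
    · rcases le_total a c with h | h
      · exact Or.inl h
      · -- c ≤ a ≤ b, and crel b c : shrink to [c,a] ⊆ [b,c]
        exact Or.inr (crel_sub (Or.inr ⟨h, hab⟩) (btw_right b c) hbc)
    · rcases le_total a c with h | h
      · exact Or.inl h
      · -- c ≤ a, crel a b, b ≤ c so b ≤ c ≤ a : [a,c] ⊆ [a,b]
        exact Or.inr (crel_sub (btw_left a b) (Or.inr ⟨hbc, h⟩) hab)
    · exact Or.inr (crel_trans hd hab hbc)
  le_antisymm := by
    rintro ⟨a⟩ ⟨b⟩ (hab | hab) (hba | hba)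
    · exact Quotient.sound (le_antisymm hab hba ▸ crel_refl P b)
    · exact Quotient.sound (crel_symm hba)
    · exact Quotient.sound hab
    · exact Quotient.sound hab
  le_total := by
    rintro ⟨a⟩ ⟨b⟩
    rcases le_total a b with h | h
    · exact Or.inl (Or.inl h)
    · exact Or.inr (Or.inl h)
  toDecidableLE := fun _ _ => Classical.propDecidable _

lemma qk_le_iff (hd : PDense P) {a b : ι} :
    (cLO hd).le (qk hd a) (qk hd b) ↔ a ≤ b ∨ crel P a b := Iff.rfl

lemma qk_mono (hd : PDense P) {a b : ι} (h : a ≤ b) : (cLO hd).le (qk hd a) (qk hd b) := Or.inl h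

lemma qk_lt_iff (hd : PDense P) {a b : ι} :
    (cLO hd).lt (qk hd a) (qk hd b) ↔ a < b ∧ ¬ crel P a b := by
  rw [(cLO hd).lt_iff_le_not_ge]
  constructor
  · rintro ⟨h1, h2⟩
    rw [qk_le_iff] at h1 h2
    push_neg at h2
    rcases h1 with h1 | h1
    · exact ⟨lt_of_le_of_ne h1 (fun e => h2.2 (crel_symm (e ▸ crel_refl P a))), h2.2 ∘ crel_symm⟩
    · exact absurd (crel_symm h1) h2.2
  · rintro ⟨h1, h2⟩
    refine ⟨Or.inl h1.le, ?_⟩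
    rw [qk_le_iff]
    rintro (h3 | h3)
    · exact absurd (le_antisymm h1.le h3) (fun e => h2 (e ▸ crel_refl P a))
    · exact h2 (crel_symm h3)

lemma cq_countable [Countable ι] (hd : PDense P) : Countable (CQ hd) := Quotient.countable

section Iso

lemma subset_iso_rat (S : Set ℚ) (hne : S.Nonempty)
    (hconv : ∀ x ∈ S, ∀ y ∈ S, ∀ z : ℚ, x < z → z < y → z ∈ S)
    (hup : ∀ x ∈ S, ∃ y ∈ S, x < y) (hdown : ∀ x ∈ S, ∃ y ∈ S, y < x) :
    Nonempty (↥S ≃o ℚ) := by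
  haveI : Nonempty ↥S := hne.to_subtype
  haveI : DenselyOrdered ↥S := ⟨by
    rintro ⟨a, ha⟩ ⟨b, hb⟩ h
    obtain ⟨c, hc1, hc2⟩ := exists_between (show a < b from h)
    exact ⟨⟨c, hconv a ha b hb c hc1 hc2⟩, hc1, hc2⟩⟩
  haveI : NoMaxOrder ↥S := ⟨by
    rintro ⟨a, ha⟩
    obtain ⟨y, hy, h⟩ := hup a ha
    exact ⟨⟨y, hy⟩, h⟩⟩
  haveI : NoMinOrder ↥S := ⟨by
    rintro ⟨a, ha⟩
    obtain ⟨y, hy, h⟩ := hdown a ha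
    exact ⟨⟨y, hy⟩, h⟩⟩
  exact Order.iso_of_countable_dense ↥S ℚ

lemma isMax_unique' {α : Type} [LinearOrder α] {a b : α} (ha : IsMax a) (hb : IsMax b) :
    a = b :=
  le_antisymm (hb.isTop a) (ha.isTop b)

lemma isMin_unique' {α : Type} [LinearOrder α] {a b : α} (ha : IsMin a) (hb : IsMin b) :
    a = b :=
  le_antisymm (ha.isBot b) (hb.isBot a)

lemma not_isMax_of_isMin {α : Type} [LinearOrder α] [Nontrivial α] {x : α} (h : IsMin x) :
    ¬IsMax x := by
  intro h2
  obtain ⟨u, v, huv⟩ := exists_pair_ne α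
  exact huv ((le_antisymm (h2 (h.isBot u)) (h.isBot u)).trans
    (le_antisymm (h.isBot v) (h2 (h.isBot v))))

lemma min_lt_of_not_isMin {α : Type} [LinearOrder α] {m b : α} (h : IsMin m)
    (hb : ¬IsMin b) : m < b := by
  obtain ⟨c, hc⟩ := not_isMin_iff.mp hb
  exact lt_of_le_of_lt (h.isBot c) hc

lemma lt_max_of_not_isMax {α : Type} [LinearOrder α] {M b : α} (h : IsMax M)
    (hb : ¬IsMax b) : b < M := by
  obtain ⟨c, hc⟩ := not_isMax_iff.mp hb
  exact lt_of_lt_of_le hc (h.isTop c)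

lemma min_lt_max' {α : Type} [LinearOrder α] [Nontrivial α] {m M : α} (h1 : IsMin m)
    (h2 : IsMax M) : m < M :=
  min_lt_of_not_isMin h1 (fun h => not_isMax_of_isMin h h2)

/-- Any two countable dense nontrivial linear orders which agree about the existence of
a maximum and of a minimum are order-isomorphic. -/
lemma iso_of_cdlo (α β : Type) [LinearOrder α] [LinearOrder β]
    [Countable α] [Countable β] [DenselyOrdered α] [DenselyOrdered β]
    [Nontrivial α] [Nontrivial β]
    (hmax : (∃ a : α, IsMax a) ↔ (∃ b : β, IsMax b))
    (hmin : (∃ a : α, IsMin a) ↔ (∃ b : β, IsMin b)) :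
    Nonempty (α ≃o β) := by
  classical
  -- the interiors
  set A' := {x : α // ¬IsMax x ∧ ¬IsMin x} with hA'
  set B' := {x : β // ¬IsMax x ∧ ¬IsMin x} with hB'
  have inner : ∀ (γ : Type) [LinearOrder γ], ∀ [Countable γ] [DenselyOrdered γ] [Nontrivial γ],
      Nonempty {x : γ // ¬IsMax x ∧ ¬IsMin x} ∧
      DenselyOrdered {x : γ // ¬IsMax x ∧ ¬IsMin x} ∧
      NoMaxOrder {x : γ // ¬IsMax x ∧ ¬IsMin x} ∧
      NoMinOrder {x : γ // ¬IsMax x ∧ ¬IsMin x} := by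
    intro γ _ _ _ _
    refine ⟨?_, ⟨?_⟩, ⟨?_⟩, ⟨?_⟩⟩
    · obtain ⟨u, v, huv⟩ := exists_pair_ne γ
      rcases huv.lt_or_gt with h | h <;>
      · obtain ⟨c, hc1, hc2⟩ := exists_between h
        exact ⟨⟨c, not_isMax_iff.mpr ⟨_, hc2⟩, not_isMin_iff.mpr ⟨_, hc1⟩⟩⟩
    · rintro ⟨a, ha⟩ ⟨b, hb⟩ h
      obtain ⟨c, hc1, hc2⟩ := exists_between (show a < b from h)
      exact ⟨⟨c, not_isMax_iff.mpr ⟨_, hc2⟩, not_isMin_iff.mpr ⟨_, hc1⟩⟩, hc1, hc2⟩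
    · rintro ⟨a, ha1, ha2⟩
      obtain ⟨b, hb⟩ := not_isMax_iff.mp ha1
      obtain ⟨c, hc1, hc2⟩ := exists_between hb
      exact ⟨⟨c, not_isMax_iff.mpr ⟨_, hc2⟩, not_isMin_iff.mpr ⟨_, hc1⟩⟩, hc1⟩
    · rintro ⟨a, ha1, ha2⟩
      obtain ⟨b, hb⟩ := not_isMin_iff.mp ha2
      obtain ⟨c, hc1, hc2⟩ := exists_between hb
      exact ⟨⟨c, not_isMax_iff.mpr ⟨_, hc2⟩, not_isMin_iff.mpr ⟨_, hc1⟩⟩, hc2⟩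
  obtain ⟨hne_a, hd_a, hmax_a, hmin_a⟩ := inner α
  obtain ⟨hne_b, hd_b, hmax_b, hmin_b⟩ := inner β
  obtain ⟨e⟩ : Nonempty (A' ≃o B') := Order.iso_of_countable_dense A' B'
  -- assemble the full map
  let f : α → β := fun x =>
    if h : IsMax x then Classical.choose (hmax.mp ⟨x, h⟩)
    else if h' : IsMin x then Classical.choose (hmin.mp ⟨x, h'⟩)
    else (e ⟨x, h, h'⟩ : B').val
  have hfmax : ∀ x (h : IsMax x), f x = Classical.choose (hmax.mp ⟨x, h⟩) := by
    intro x h; simp only [f, dif_pos h]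
  have hfmin : ∀ x (h : ¬IsMax x) (h' : IsMin x),
      f x = Classical.choose (hmin.mp ⟨x, h'⟩) := by
    intro x h h'; simp only [f, dif_neg h, dif_pos h']
  have hfmid : ∀ x (h : ¬IsMax x) (h' : ¬IsMin x), f x = (e ⟨x, h, h'⟩ : B').val := by
    intro x h h'; simp only [f, dif_neg h, dif_neg h']
  have hmono : StrictMono f := by
    intro x y hxy
    have hx1 : ¬IsMax x := fun h => absurd (h hxy.le) (not_le.mpr hxy)
    have hy2 : ¬IsMin y := fun h => absurd (h hxy.le) (not_le.mpr hxy)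
    by_cases hx2 : IsMin x
    · rw [hfmin x hx1 hx2]
      have hbmin := Classical.choose_spec (hmin.mp ⟨x, hx2⟩)
      by_cases hy1 : IsMax y
      · rw [hfmax y hy1]
        exact min_lt_max' hbmin (Classical.choose_spec (hmax.mp ⟨y, hy1⟩))
      · rw [hfmid y hy1 hy2]
        exact min_lt_of_not_isMin hbmin (e ⟨y, hy1, hy2⟩).2.2
    · rw [hfmid x hx1 hx2]
      by_cases hy1 : IsMax y
      · rw [hfmax y hy1]
        exact lt_max_of_not_isMax (Classical.choose_spec (hmax.mp ⟨y, hy1⟩))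
          (e ⟨x, hx1, hx2⟩).2.1
      · rw [hfmid y hy1 hy2]
        exact Subtype.coe_lt_coe.mpr (e.strictMono (Subtype.mk_lt_mk.mpr hxy))
  have hsurj : Function.Surjective f := by
    intro y
    by_cases hy : IsMax y
    · obtain ⟨x, hx⟩ := hmax.mpr ⟨y, hy⟩
      refine ⟨x, ?_⟩
      rw [hfmax x hx]
      exact isMax_unique' (Classical.choose_spec (hmax.mp ⟨x, hx⟩)) hy
    · by_cases hy' : IsMin y
      · obtain ⟨x, hx⟩ := hmin.mpr ⟨y, hy'⟩
        refine ⟨x, ?_⟩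
        rw [hfmin x (not_isMax_of_isMin hx) hx]
        exact isMin_unique' (Classical.choose_spec (hmin.mp ⟨x, hx⟩)) hy'
      · obtain ⟨x', hx'⟩ := e.surjective ⟨y, hy, hy'⟩
        refine ⟨x'.val, ?_⟩
        rw [hfmid x'.val x'.2.1 x'.2.2]
        have : (⟨x'.val, x'.2.1, x'.2.2⟩ : A') = x' := Subtype.ext rfl
        rw [this, hx']
  exact ⟨StrictMono.orderIsoOfSurjective f hmono hsurj⟩

end Iso

end GComp
-- main_comp: to be appended after machinery
namespace GComp

lemma piece_props {S : Set ℚ} (h : Nonempty (↥S ≃o ℚ)) :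
    S.Nonempty ∧ (∀ z ∈ S, ∃ w ∈ S, z < w) ∧ (∀ z ∈ S, ∃ w ∈ S, w < z) := by
  obtain ⟨e⟩ := h
  refine ⟨⟨(e.symm 0).val, (e.symm 0).2⟩, ?_, ?_⟩
  · intro z hz
    refine ⟨(e.symm (e ⟨z, hz⟩ + 1)).val, (e.symm _).2, ?_⟩
    have h1 : e ⟨z, hz⟩ < e ⟨z, hz⟩ + 1 := lt_add_one _
    have h2 := e.symm.strictMono h1
    rw [e.symm_apply_apply] at h2
    exact h2
  · intro z hz
    refine ⟨(e.symm (e ⟨z, hz⟩ - 1)).val, (e.symm _).2, ?_⟩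
    have h1 : e ⟨z, hz⟩ - 1 < e ⟨z, hz⟩ := sub_one_lt _
    have h2 := e.symm.strictMono h1
    rw [e.symm_apply_apply] at h2
    exact h2

/-- both colours of an `ι`-indexed colouring are dense -/
def DenseBoth {ι : Type} [LinearOrder ι] (R : ι → Prop) : Prop :=
  ∀ x y : ι, x < y → (∃ z, x < z ∧ z < y ∧ R z) ∧ (∃ z, x < z ∧ z < y ∧ ¬ R z)

theorem main_comp {ι : Type} [LinearOrder ι] [Countable ι] [DenselyOrdered ι] [Nontrivial ι]
    {g₁ g₂ : ℚ → ℚ} (h₂ : StrictMono g₂)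
    {RA RB : ι → Prop}
    (dA : DenseBoth RA) (dB : DenseBoth RB)
    (eB : ∀ q : ι, RB q → ¬IsMax q ∧ ¬IsMin q)
    (DA : Decomp ι RA g₂) (DB : Decomp ι RB g₁) :
    ∃ R' : ι → Prop, DenseBoth R' ∧ (∀ q : ι, R' q → ¬IsMax q ∧ ¬IsMin q) ∧
      Decomp ι R' (g₂ ∘ g₁) := by
  obtain ⟨A, hA_mem, hA_ord, hA_conv, hA_iso, hA_red, hA_blue⟩ := DA
  obtain ⟨B, hB_mem, hB_ord, hB_conv, hB_iso, hB_red, hB_blue⟩ := DB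
  classical
  choose idxA hidxA huniqA using hA_mem
  choose idxB hidxB huniqB using hB_mem
  -- basic facts about the A decomposition
  have idxA_mono : ∀ {x y : ℚ}, x ≤ y → idxA x ≤ idxA y := by
    intro x y hxy
    by_contra h
    push_neg at h
    exact absurd (hA_ord _ _ h y (hidxA y) x (hidxA x)) (not_lt.mpr hxy)
  have idxB_mono : ∀ {x y : ℚ}, x ≤ y → idxB x ≤ idxB y := by
    intro x y hxy
    by_contra h
    push_neg at h
    exact absurd (hB_ord _ _ h y (hidxB y) x (hidxB x)) (not_lt.mpr hxy)
  have hRA_of_mem : ∀ z : ℚ, z ∈ Set.range g₂ → RA (idxA z) := by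
    intro z hz
    by_contra h
    have := hA_blue _ h
    exact absurd (this ▸ (⟨hidxA z, hz⟩ : z ∈ A (idxA z) ∩ Set.range g₂)) (Set.notMem_empty z)
  have hRB_of_mem : ∀ y : ℚ, y ∈ Set.range g₁ → RB (idxB y) := by
    intro y hy
    by_contra h
    have := hB_blue _ h
    exact absurd (this ▸ (⟨hidxB y, hy⟩ : y ∈ B (idxB y) ∩ Set.range g₁)) (Set.notMem_empty y)
  have hAuniq2 : ∀ z z' : ℚ, z ∈ Set.range g₂ → z' ∈ Set.range g₂ → idxA z = idxA z' →
      z = z' := by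
    intro z z' h h' he
    obtain ⟨y, _, hy2⟩ := hA_red _ (hRA_of_mem z h)
    exact (hy2 z ⟨hidxA z, h⟩).trans (hy2 z' ⟨he ▸ hidxA z', h'⟩).symm
  have hBuniq2 : ∀ y y' : ℚ, y ∈ Set.range g₁ → y' ∈ Set.range g₁ → idxB y = idxB y' →
      y = y' := by
    intro z z' h h' he
    obtain ⟨y, _, hy2⟩ := hB_red _ (hRB_of_mem z h)
    exact (hy2 z ⟨hidxB z, h⟩).trans (hy2 z' ⟨he ▸ hidxB z', h'⟩).symm
  have strictA : ∀ x y : ℚ, x < y → idxA (g₂ x) < idxA (g₂ y) := by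
    intro x y hxy
    refine lt_of_le_of_ne (idxA_mono (h₂ hxy).le) (fun he => ?_)
    exact absurd (h₂.injective (hAuniq2 _ _ ⟨x, rfl⟩ ⟨y, rfl⟩ he)) (ne_of_lt hxy)
  have strictB : ∀ y y' : ℚ, y ∈ Set.range g₁ → y' ∈ Set.range g₁ → y < y' →
      idxB y < idxB y' := by
    intro y y' hy hy' hlt
    exact lt_of_le_of_ne (idxB_mono hlt.le)
      (fun he => absurd (hBuniq2 _ _ hy hy' he) (ne_of_lt hlt))
  -- the composite-red predicate on pieces
  set P : ι → Prop := fun q => (A q ∩ Set.range (g₂ ∘ g₁)).Nonempty with hP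
  have hsub : Set.range (g₂ ∘ g₁) ⊆ Set.range g₂ := by
    rintro z ⟨a, rfl⟩; exact ⟨g₁ a, rfl⟩
  have hPRA : ∀ q, P q → RA q := by
    rintro q ⟨z, hz1, hz2⟩
    have : idxA z = q := (huniqA z q hz1).symm ▸ rfl
    exact this ▸ hRA_of_mem z (hsub hz2)
  have P_im : ∀ y : ℚ, y ∈ Set.range g₁ → P (idxA (g₂ y)) := by
    rintro y ⟨a, rfl⟩
    exact ⟨g₂ (g₁ a), hidxA _, ⟨a, rfl⟩⟩
  have P_rep : ∀ q, P q → ∃ y ∈ Set.range g₁, idxA (g₂ y) = q := by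
    rintro q ⟨z, hz1, a, rfl⟩
    exact ⟨g₁ a, ⟨a, rfl⟩, (huniqA _ q hz1).symm⟩
  -- a point of `im g₁` separating two B-pieces
  have F_mid : ∀ p p' : ι, p < p' → ∃ y ∈ Set.range g₁,
      (∀ b ∈ B p, b < y) ∧ (∀ b ∈ B p', y < b) := by
    intro p p' h
    obtain ⟨r, hr1, hr2, hr3⟩ := (dB p p' h).1
    obtain ⟨y, hy⟩ := (hB_red r hr3).exists
    exact ⟨y, hy.2, fun b hb => hB_ord p r hr1 b hb y hy.1,
      fun b hb => hB_ord r p' hr2 y hy.1 b hb⟩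
  have B_ne : ∀ p : ι, (B p).Nonempty := fun p => (piece_props (hB_iso p)).1
  have A_ne : ∀ q : ι, (A q).Nonempty := fun q => (piece_props (hA_iso q)).1
  -- ordering of images
  have im_lt : ∀ {u v : ι} {zu zv : ℚ}, u < v → zu ∈ A u → zv ∈ A v → zu < zv :=
    fun h h1 h2 => hA_ord _ _ h _ h1 _ h2
  -- density of P in itself
  have hd : PDense P := by
    intro u v Pu Pv huv
    obtain ⟨yu, hyu, hu⟩ := P_rep u Pu
    obtain ⟨yv, hyv, hv⟩ := P_rep v Pv
    have hyuv : yu < yv := by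
      have := im_lt huv (hu ▸ hidxA (g₂ yu)) (hv ▸ hidxA (g₂ yv))
      exact h₂.lt_iff_lt.mp this
    obtain ⟨y, hy, hy1, hy2⟩ := F_mid (idxB yu) (idxB yv) (strictB _ _ hyu hyv hyuv)
    have h1 : yu < y := hy1 yu (hidxB yu)
    have h2 : y < yv := hy2 yv (hidxB yv)
    exact ⟨idxA (g₂ y), P_im y hy, hu ▸ strictA _ _ h1, hv ▸ strictA _ _ h2⟩
  -- the quotient
  letI : LinearOrder (CQ hd) := cLO hd
  haveI : Countable (CQ hd) := cq_countable hd
  -- distinct composite points are in distinct classes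
  have QF0 : ∀ {u v : ι}, P u → P v → crel P u v → u = v :=
    fun {u v} Pu Pv hc => hc u v (btw_left u v) (btw_right u v) Pu Pv
  have QF1 : ∀ {u v : ι}, P u → P v → u < v → qk hd u < qk hd v := by
    intro u v Pu Pv huv
    exact (qk_lt_iff hd).mpr ⟨huv, fun hc => (ne_of_lt huv) (QF0 Pu Pv hc)⟩
  -- red classes are dense
  have QF2 : ∀ c c' : CQ hd, c < c' → ∃ w, P w ∧ c < qk hd w ∧ qk hd w < c' := by
    intro c c' hcc
    obtain ⟨a, rfl⟩ := qk_surjective hd c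
    obtain ⟨b, rfl⟩ := qk_surjective hd c'
    obtain ⟨hab, hnc⟩ := (qk_lt_iff hd).mp hcc
    simp only [crel, not_forall] at hnc
    obtain ⟨s, t, hs, ht, Ps, Pt, hst⟩ := hnc
    rcases lt_or_gt_of_ne hst with h | h
    · obtain ⟨w, Pw, h1, h2⟩ := hd s t Ps Pt h
      have hsab : a ≤ s ∧ s ≤ b := by
        rcases hs with h' | h'
        · exact h'
        · exact ⟨le_trans hab.le h'.1, le_trans h'.2 hab.le⟩
      have htab : a ≤ t ∧ t ≤ b := by
        rcases ht with h' | h'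
        · exact h'
        · exact ⟨le_trans hab.le h'.1, le_trans h'.2 hab.le⟩
      exact ⟨w, Pw, lt_of_le_of_lt (qk_mono hd hsab.1) (QF1 Ps Pw h1),
        lt_of_lt_of_le (QF1 Pw Pt h2) (qk_mono hd htab.2)⟩
    · obtain ⟨w, Pw, h1, h2⟩ := hd t s Pt Ps h
      have hsab : a ≤ t ∧ t ≤ b := by
        rcases ht with h' | h'
        · exact h'
        · exact ⟨le_trans hab.le h'.1, le_trans h'.2 hab.le⟩
      have htab : a ≤ s ∧ s ≤ b := by
        rcases hs with h' | h'
        · exact h'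
        · exact ⟨le_trans hab.le h'.1, le_trans h'.2 hab.le⟩
      exact ⟨w, Pw, lt_of_le_of_lt (qk_mono hd hsab.1) (QF1 Pt Pw h1),
        lt_of_lt_of_le (QF1 Pw Ps h2) (qk_mono hd htab.2)⟩
  set Red' : CQ hd → Prop := fun c => ∃ t, qk hd t = c ∧ P t with hRed'
  -- the class of the image of a point of a blue B-piece is blue
  have CLM : ∀ x₀ : ℚ, ¬RB (idxB x₀) → ∀ t, P t → ¬crel P t (idxA (g₂ x₀)) := by
    intro x₀ hblue t Pt hc
    have hx₀ : x₀ ∉ Set.range g₁ := fun h => hblue (hRB_of_mem x₀ h)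
    obtain ⟨yt, hyt, ht⟩ := P_rep t Pt
    have hne : yt ≠ x₀ := fun h => hx₀ (h ▸ hyt)
    rcases hne.lt_or_gt with h | h
    · -- yt < x₀ : t < q₀
      have hpp : idxB yt < idxB x₀ :=
        lt_of_le_of_ne (idxB_mono h.le)
          (fun he => hblue (he ▸ hRB_of_mem yt hyt))
      obtain ⟨y₁, hy₁, hb1, hb2⟩ := F_mid _ _ hpp
      have h1 : yt < y₁ := hb1 yt (hidxB yt)
      have h2 : y₁ < x₀ := hb2 x₀ (hidxB x₀)
      have ht1 : t < idxA (g₂ y₁) := ht ▸ strictA _ _ h1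
      have ht2 : idxA (g₂ y₁) < idxA (g₂ x₀) := strictA _ _ h2
      exact absurd (hc (idxA (g₂ y₁)) t (Or.inl ⟨ht1.le, ht2.le⟩) (btw_left _ _)
        (P_im y₁ hy₁) Pt) (ne_of_gt ht1)
    · -- x₀ < yt : q₀ < t
      have hpp : idxB x₀ < idxB yt :=
        lt_of_le_of_ne (idxB_mono h.le)
          (fun he => hblue (he.symm ▸ hRB_of_mem yt hyt))
      obtain ⟨y₁, hy₁, hb1, hb2⟩ := F_mid _ _ hpp
      have h1 : x₀ < y₁ := hb1 x₀ (hidxB x₀)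
      have h2 : y₁ < yt := hb2 yt (hidxB yt)
      have ht1 : idxA (g₂ x₀) < idxA (g₂ y₁) := strictA _ _ h1
      have ht2 : idxA (g₂ y₁) < t := ht ▸ strictA _ _ h2
      exact absurd (hc (idxA (g₂ y₁)) t (Or.inr ⟨ht1.le, ht2.le⟩) (btw_left _ _)
        (P_im y₁ hy₁) Pt) (ne_of_lt ht2)
  -- blue classes are dense
  have QF3 : ∀ c c' : CQ hd, c < c' → ∃ w, ¬Red' (qk hd w) ∧ c < qk hd w ∧ qk hd w < c' := by
    intro c c' hcc
    obtain ⟨u, Pu, hu1, hu2⟩ := QF2 c c' hcc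
    obtain ⟨v, Pv, hv1, hv2⟩ := QF2 _ c' hu2
    obtain ⟨yu, hyu, hru⟩ := P_rep u Pu
    obtain ⟨yv, hyv, hrv⟩ := P_rep v Pv
    have huv : u < v := ((qk_lt_iff hd).mp hv1).1
    have hyuv : yu < yv :=
      h₂.lt_iff_lt.mp (im_lt huv (hru ▸ hidxA (g₂ yu)) (hrv ▸ hidxA (g₂ yv)))
    obtain ⟨p₀, hp1, hp2, hp0blue⟩ := (dB _ _ (strictB _ _ hyu hyv hyuv)).2
    obtain ⟨x₀, hx₀⟩ := B_ne p₀
    have hbx₀ : idxB x₀ = p₀ := (huniqB x₀ p₀ hx₀).symm ▸ rfl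
    have hblue : ¬RB (idxB x₀) := hbx₀ ▸ hp0blue
    refine ⟨idxA (g₂ x₀), ?_, ?_, ?_⟩
    · rintro ⟨t, hteq, Pt⟩
      exact CLM x₀ hblue t Pt ((qk_eq_iff hd).mp hteq)
    · -- qk u < qk q₀
      have h1 : yu < x₀ := hB_ord _ _ (hbx₀ ▸ hp1) yu (hidxB yu) x₀ hx₀
      refine lt_trans hu1 ((qk_lt_iff hd).mpr ⟨hru ▸ strictA _ _ h1, ?_⟩)
      exact fun hcr => CLM x₀ hblue u Pu hcr
    · -- qk q₀ < qk v
      have h2 : x₀ < yv := hB_ord _ _ (hbx₀ ▸ hp2) x₀ hx₀ yv (hidxB yv)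
      refine lt_trans ((qk_lt_iff hd).mpr ⟨hrv ▸ strictA _ _ h2, ?_⟩) hv2
      exact fun hcr => CLM x₀ hblue v Pv (crel_symm hcr)
  -- no maximum in the quotient if ι has none
  have QF_nomax : (∀ q : ι, ¬IsMax q) → ∀ c : CQ hd, ∃ c', c < c' := by
    intro hno c
    obtain ⟨a, rfl⟩ := qk_surjective hd c
    -- a point of range g₂ above the piece A a
    have upA : ∀ q : ι, ∃ x : ℚ, ∀ w ∈ A q, w < g₂ x := by
      intro q
      obtain ⟨q', hq'⟩ := not_isMax_iff.mp (hno q)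
      obtain ⟨r, hr1, hr2, hr3⟩ := (dA q q' hq').1
      obtain ⟨z, hz⟩ := (hA_red r hr3).exists
      obtain ⟨x, rfl⟩ := hz.2
      exact ⟨x, fun w hw => hA_ord q r hr1 w hw _ hz.1⟩
    have upIm : ∀ z : ℚ, ∃ y ∈ Set.range g₁, z < y := by
      intro z
      obtain ⟨p', hp'⟩ := not_isMax_iff.mp (hno (idxB z))
      obtain ⟨y, hy, hy1, _⟩ := F_mid _ _ hp'
      exact ⟨y, hy, hy1 z (hidxB z)⟩
    obtain ⟨x, hx⟩ := upA a
    obtain ⟨y₁, hy₁, hxy₁⟩ := upIm x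
    obtain ⟨y₂, hy₂, hyy₂⟩ := upIm y₁
    set t₁ := idxA (g₂ y₁) with hdeft₁
    set t₂ := idxA (g₂ y₂) with hdeft₂
    have hgy : ∀ w ∈ A a, w < g₂ y₁ := fun w hw => lt_trans (hx w hw) (h₂ hxy₁)
    have hat : a < t₁ := by
      rcases lt_trichotomy a t₁ with h | h | h
      · exact h
      · have hmem : g₂ y₁ ∈ A a := by rw [h]; exact hidxA _
        exact absurd (hgy _ hmem) (lt_irrefl _)
      · obtain ⟨w, hw⟩ := A_ne a
        exact absurd (lt_trans (im_lt h (hidxA (g₂ y₁)) hw) (hgy w hw)) (lt_irrefl _)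
    have ht12 : t₁ < t₂ := strictA _ _ hyy₂
    refine ⟨qk hd t₂, (qk_lt_iff hd).mpr ⟨lt_trans hat ht12, fun hcr => ?_⟩⟩
    exact absurd (hcr t₁ t₂ (Or.inl ⟨hat.le, ht12.le⟩)
      (btw_right a t₂) (P_im y₁ hy₁) (P_im y₂ hy₂)) (ne_of_lt ht12)
  have QF_nomin : (∀ q : ι, ¬IsMin q) → ∀ c : CQ hd, ∃ c', c' < c := by
    intro hno c
    obtain ⟨a, rfl⟩ := qk_surjective hd c
    have downA : ∀ q : ι, ∃ x : ℚ, ∀ w ∈ A q, g₂ x < w := by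
      intro q
      obtain ⟨q', hq'⟩ := not_isMin_iff.mp (hno q)
      obtain ⟨r, hr1, hr2, hr3⟩ := (dA q' q hq').1
      obtain ⟨z, hz⟩ := (hA_red r hr3).exists
      obtain ⟨x, rfl⟩ := hz.2
      exact ⟨x, fun w hw => hA_ord r q hr2 _ hz.1 w hw⟩
    have downIm : ∀ z : ℚ, ∃ y ∈ Set.range g₁, y < z := by
      intro z
      obtain ⟨p', hp'⟩ := not_isMin_iff.mp (hno (idxB z))
      obtain ⟨y, hy, _, hy2⟩ := F_mid _ _ hp'
      exact ⟨y, hy, hy2 z (hidxB z)⟩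
    obtain ⟨x, hx⟩ := downA a
    obtain ⟨y₁, hy₁, hxy₁⟩ := downIm x
    obtain ⟨y₂, hy₂, hyy₂⟩ := downIm y₁
    set t₁ := idxA (g₂ y₁) with hdeft₁
    set t₂ := idxA (g₂ y₂) with hdeft₂
    have hgy : ∀ w ∈ A a, g₂ y₁ < w := fun w hw => lt_trans (h₂ hxy₁) (hx w hw)
    have hat : t₁ < a := by
      rcases lt_trichotomy t₁ a with h | h | h
      · exact h
      · have hmem : g₂ y₁ ∈ A a := by rw [← h]; exact hidxA _
        exact absurd (hgy _ hmem) (lt_irrefl _)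
      · obtain ⟨w, hw⟩ := A_ne a
        exact absurd (lt_trans (hgy w hw) (im_lt h hw (hidxA (g₂ y₁)))) (lt_irrefl _)
    have ht12 : t₂ < t₁ := strictA _ _ hyy₂
    refine ⟨qk hd t₂, (qk_lt_iff hd).mpr ⟨lt_trans ht12 hat, fun hcr => ?_⟩⟩
    exact absurd (hcr t₁ t₂ (Or.inl ⟨ht12.le, hat.le⟩)
      (btw_left t₂ a) (P_im y₁ hy₁) (P_im y₂ hy₂)) (ne_of_gt ht12)
  -- endpoint blue in the quotient
  have QF4max : ∀ c : CQ hd, IsMax c → ¬Red' c := by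
    rintro c hcmax ⟨t, rfl, Pt⟩
    obtain ⟨yt, hyt, ht⟩ := P_rep t Pt
    obtain ⟨p', hp'⟩ := not_isMax_iff.mp (eB _ (hRB_of_mem yt hyt)).1
    obtain ⟨y', hy', hb1, _⟩ := F_mid _ _ hp'
    have h1 : yt < y' := hb1 yt (hidxB yt)
    have hlt : qk hd t < qk hd (idxA (g₂ y')) :=
      QF1 Pt (P_im y' hy') (ht ▸ strictA _ _ h1)
    exact absurd (hcmax hlt.le) (not_le.mpr hlt)
  have QF4min : ∀ c : CQ hd, IsMin c → ¬Red' c := by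
    rintro c hcmin ⟨t, rfl, Pt⟩
    obtain ⟨yt, hyt, ht⟩ := P_rep t Pt
    obtain ⟨p', hp'⟩ := not_isMin_iff.mp (eB _ (hRB_of_mem yt hyt)).2
    obtain ⟨y', hy', _, hb2⟩ := F_mid _ _ hp'
    have h1 : y' < yt := hb2 yt (hidxB yt)
    have hlt : qk hd (idxA (g₂ y')) < qk hd t :=
      QF1 (P_im y' hy') Pt (ht ▸ strictA _ _ h1)
    exact absurd (hcmin hlt.le) (not_le.mpr hlt)
  -- the quotient is a countable dense nontrivial linear order with matching endpoints
  haveI : DenselyOrdered (CQ hd) := ⟨by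
    intro c c' h
    obtain ⟨w, _, h1, h2⟩ := QF2 c c' h
    exact ⟨qk hd w, h1, h2⟩⟩
  haveI : Nontrivial (CQ hd) := by
    obtain ⟨u, v, huv⟩ := exists_pair_ne ι
    have h0 : min u v < max u v := by
      rcases huv.lt_or_gt with h | h
      · rw [min_eq_left h.le, max_eq_right h.le]; exact h
      · rw [min_eq_right h.le, max_eq_left h.le]; exact h
    obtain ⟨p₁, hp₁a, hp₁b, hp₁r⟩ := (dB _ _ h0).1
    obtain ⟨p₂, hp₂a, hp₂b, hp₂r⟩ := (dB _ _ hp₁b).1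
    obtain ⟨y₁, hy₁⟩ := (hB_red p₁ hp₁r).exists
    obtain ⟨y₂, hy₂⟩ := (hB_red p₂ hp₂r).exists
    have h12 : y₁ < y₂ := hB_ord _ _ hp₂a _ hy₁.1 _ hy₂.1
    exact ⟨qk hd (idxA (g₂ y₁)), qk hd (idxA (g₂ y₂)),
      ne_of_lt (QF1 (P_im y₁ hy₁.2) (P_im y₂ hy₂.2) (strictA _ _ h12))⟩
  have hmaxiff : (∃ m : ι, IsMax m) ↔ (∃ c : CQ hd, IsMax c) := by
    constructor
    · rintro ⟨m, hm⟩
      refine ⟨qk hd m, ?_⟩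
      intro c hle
      obtain ⟨b, rfl⟩ := qk_surjective hd c
      exact qk_mono hd (hm.isTop b)
    · rintro ⟨c, hc⟩
      by_contra hno
      push_neg at hno
      obtain ⟨c', hc'⟩ := QF_nomax (by simpa using hno) c
      exact absurd (hc hc'.le) (not_le.mpr hc')
  have hminiff : (∃ m : ι, IsMin m) ↔ (∃ c : CQ hd, IsMin c) := by
    constructor
    · rintro ⟨m, hm⟩
      refine ⟨qk hd m, ?_⟩
      intro c hle
      obtain ⟨b, rfl⟩ := qk_surjective hd c
      exact qk_mono hd (hm.isBot b)
    · rintro ⟨c, hc⟩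
      by_contra hno
      push_neg at hno
      obtain ⟨c', hc'⟩ := QF_nomin (by simpa using hno) c
      exact absurd (hc hc'.le) (not_le.mpr hc')
  obtain ⟨e⟩ := iso_of_cdlo ι (CQ hd) hmaxiff hminiff
  -- transfer of extremality along e
  have emax : ∀ q : ι, IsMax q → IsMax (e q) := by
    intro q h c hc
    obtain ⟨i, rfl⟩ := e.surjective c
    exact e.le_iff_le.mpr (h (e.le_iff_le.mp hc))
  have emin : ∀ q : ι, IsMin q → IsMin (e q) := by
    intro q h c hc
    obtain ⟨i, rfl⟩ := e.surjective c
    exact e.le_iff_le.mpr (h (e.le_iff_le.mp hc))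
  -- the new colouring and decomposition
  refine ⟨fun q => Red' (e q), ?_, ?_, ?_⟩
  · -- DenseBoth
    intro x y hxy
    constructor
    · obtain ⟨w, Pw, h1, h2⟩ := QF2 (e x) (e y) (e.lt_iff_lt.mpr hxy)
      refine ⟨e.symm (qk hd w), ?_, ?_, ?_⟩
      · have := e.symm.lt_iff_lt.mpr h1
        rwa [e.symm_apply_apply] at this
      · have := e.symm.lt_iff_lt.mpr h2
        rwa [e.symm_apply_apply] at this
      · show Red' (e (e.symm (qk hd w)))
        rw [e.apply_symm_apply]
        exact ⟨w, rfl, Pw⟩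
    · obtain ⟨w, hw, h1, h2⟩ := QF3 (e x) (e y) (e.lt_iff_lt.mpr hxy)
      refine ⟨e.symm (qk hd w), ?_, ?_, ?_⟩
      · have := e.symm.lt_iff_lt.mpr h1
        rwa [e.symm_apply_apply] at this
      · have := e.symm.lt_iff_lt.mpr h2
        rwa [e.symm_apply_apply] at this
      · show ¬Red' (e (e.symm (qk hd w)))
        rw [e.apply_symm_apply]
        exact hw
  · -- extremes are blue
    intro q hq
    constructor
    · intro hmax
      exact QF4max (e q) (emax q hmax) hq
    · intro hmin
      exact QF4min (e q) (emin q hmin) hq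
  · -- the decomposition
    refine ⟨fun i => {z : ℚ | qk hd (idxA z) = e i}, ?_, ?_, ?_, ?_, ?_, ?_⟩
    · intro z
      refine ⟨e.symm (qk hd (idxA z)), by simp [Set.mem_setOf_eq], ?_⟩
      intro i hi
      simp only [Set.mem_setOf_eq] at hi
      rw [hi, e.symm_apply_apply]
    · intro q r hqr a ha b hb
      simp only [Set.mem_setOf_eq] at ha hb
      have : qk hd (idxA a) < qk hd (idxA b) := by
        rw [ha, hb]; exact e.lt_iff_lt.mpr hqr
      exact im_lt ((qk_lt_iff hd).mp this).1 (hidxA a) (hidxA b)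
    · intro q
      constructor
      intro x hx y hy z hz
      simp only [Set.mem_setOf_eq] at hx hy ⊢
      have h1 : qk hd (idxA x) ≤ qk hd (idxA z) := qk_mono hd (idxA_mono hz.1)
      have h2 : qk hd (idxA z) ≤ qk hd (idxA y) := qk_mono hd (idxA_mono hz.2)
      rw [hx] at h1
      rw [hy] at h2
      exact le_antisymm h2 h1
    · intro q
      apply subset_iso_rat
      · obtain ⟨a, ha⟩ := qk_surjective hd (e q)
        obtain ⟨z, hz⟩ := A_ne a
        exact ⟨z, by simp only [Set.mem_setOf_eq, (huniqA z a hz : a = idxA z) ▸ ha]⟩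
      · intro x hx y hy z h1 h2
        simp only [Set.mem_setOf_eq] at hx hy ⊢
        have ha1 : qk hd (idxA x) ≤ qk hd (idxA z) := qk_mono hd (idxA_mono h1.le)
        have ha2 : qk hd (idxA z) ≤ qk hd (idxA y) := qk_mono hd (idxA_mono h2.le)
        rw [hx] at ha1
        rw [hy] at ha2
        exact le_antisymm ha2 ha1
      · intro z hz
        obtain ⟨w, hw, hzw⟩ := (piece_props (hA_iso (idxA z))).2.1 z (hidxA z)
        refine ⟨w, ?_, hzw⟩
        simp only [Set.mem_setOf_eq] at hz ⊢
        rw [← (huniqA w _ hw : idxA z = idxA w)]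
        exact hz
      · intro z hz
        obtain ⟨w, hw, hzw⟩ := (piece_props (hA_iso (idxA z))).2.2 z (hidxA z)
        refine ⟨w, ?_, hzw⟩
        simp only [Set.mem_setOf_eq] at hz ⊢
        rw [← (huniqA w _ hw : idxA z = idxA w)]
        exact hz
    · rintro q ⟨t, ht, Pt⟩
      obtain ⟨z₀, hz₀A, hz₀r⟩ := id Pt
      have hidz : idxA z₀ = t := (huniqA z₀ t hz₀A).symm
      refine ⟨z₀, ⟨by simp only [Set.mem_setOf_eq, hidz, ht], hz₀r⟩, ?_⟩
      rintro z' ⟨hz'm, hz'r⟩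
      simp only [Set.mem_setOf_eq] at hz'm
      have hPz' : P (idxA z') := ⟨z', hidxA z', hz'r⟩
      have : idxA z' = t := QF0 hPz' Pt ((qk_eq_iff hd).mp (hz'm.trans ht.symm))
      exact hAuniq2 z' z₀ (hsub hz'r) (hsub hz₀r) (this.trans hidz.symm)
    · intro q hq
      rw [Set.eq_empty_iff_forall_notMem]
      rintro z ⟨hzm, hzr⟩
      simp only [Set.mem_setOf_eq] at hzm
      exact hq ⟨idxA z, hzm, ⟨z, hidxA z, hzr⟩⟩

end GComp
namespace GComp

lemma Decomp.congr {ι : Type} [LinearOrder ι] {R R' : ι → Prop} (h : ∀ q, R q ↔ R' q)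
    {f : ℚ → ℚ} : Decomp ι R f → Decomp ι R' f := by
  rintro ⟨A, h1, h2, h3, h4, h5, h6⟩
  exact ⟨A, h1, h2, h3, h4, fun q hq => h5 q ((h q).mpr hq),
    fun q hq => h6 q (fun hr => hq ((h q).mp hr))⟩

theorem transfer {ι : Type} [LinearOrder ι] [Countable ι] [DenselyOrdered ι] [Nontrivial ι]
    (c : ℚ → ι) (hc : StrictMono c)
    (hdense : ∀ x y : ι, x < y → ∃ p : ℚ, x < c p ∧ c p < y)
    (hext : ∀ q : ι, q ∉ Set.range c → IsMax q ∨ IsMin q)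
    (hnoext : ∀ p : ℚ, ¬IsMax (c p) ∧ ¬IsMin (c p))
    {g₁ g₂ : ℚ → ℚ} (h₂ : StrictMono g₂)
    {R₁ R₂ : ℚ → Prop} (hd₁ : DenseColouring R₁) (hd₂ : DenseColouring R₂)
    (D₁ : Decomp ι (fun q => ∃ p : ℚ, q = c p ∧ R₁ p) g₁)
    (D₂ : Decomp ι (fun q => ∃ p : ℚ, q = c p ∧ R₂ p) g₂) :
    ∃ R : ℚ → Prop, DenseColouring R ∧
      Decomp ι (fun q => ∃ p : ℚ, q = c p ∧ R p) (g₂ ∘ g₁) := by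
  have mkDense : ∀ R0 : ℚ → Prop, DenseColouring R0 →
      DenseBoth (fun q : ι => ∃ p : ℚ, q = c p ∧ R0 p) := by
    intro R0 hR0 x y hxy
    obtain ⟨p₁, hp₁, hp₁'⟩ := hdense x y hxy
    obtain ⟨p₂, hp₂, hp₂'⟩ := hdense (c p₁) y hp₁'
    have hp12 : p₁ < p₂ := hc.lt_iff_lt.mp hp₂
    constructor
    · obtain ⟨r, hr1, hr2, hr3⟩ := (hR0 p₁ p₂ hp12).1
      exact ⟨c r, lt_trans hp₁ (hc hr1), lt_trans (hc hr2) hp₂', r, rfl, hr3⟩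
    · obtain ⟨r, hr1, hr2, hr3⟩ := (hR0 p₁ p₂ hp12).2
      refine ⟨c r, lt_trans hp₁ (hc hr1), lt_trans (hc hr2) hp₂', ?_⟩
      rintro ⟨p, hp, hR⟩
      exact hr3 ((hc.injective hp) ▸ hR)
  have mkeB : ∀ q : ι, (∃ p : ℚ, q = c p ∧ R₁ p) → ¬IsMax q ∧ ¬IsMin q := by
    rintro q ⟨p, rfl, _⟩
    exact hnoext p
  obtain ⟨R', hR'd, hR'e, hR'D⟩ :=
    main_comp h₂ (mkDense R₂ hd₂) (mkDense R₁ hd₁) mkeB D₂ D₁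
  refine ⟨fun p => R' (c p), ?_, ?_⟩
  · -- DenseColouring
    intro p p' hpp
    have hcc := hc hpp
    constructor
    · obtain ⟨z, hz1, hz2, hz3⟩ := (hR'd _ _ hcc).1
      have hzr : z ∈ Set.range c := by
        by_contra hzr
        rcases hext z hzr with h | h
        · exact h.not_lt hz2
        · exact h.not_lt hz1
      obtain ⟨w, rfl⟩ := hzr
      exact ⟨w, hc.lt_iff_lt.mp hz1, hc.lt_iff_lt.mp hz2, hz3⟩
    · obtain ⟨z, hz1, hz2, hz3⟩ := (hR'd _ _ hcc).2
      have hzr : z ∈ Set.range c := by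
        by_contra hzr
        rcases hext z hzr with h | h
        · exact h.not_lt hz2
        · exact h.not_lt hz1
      obtain ⟨w, rfl⟩ := hzr
      exact ⟨w, hc.lt_iff_lt.mp hz1, hc.lt_iff_lt.mp hz2, hz3⟩
  · refine Decomp.congr (fun q => ?_) hR'D
    constructor
    · intro hq
      by_cases hqr : q ∈ Set.range c
      · obtain ⟨p, rfl⟩ := hqr
        exact ⟨p, rfl, hq⟩
      · exact absurd ((hR'e q hq).1) (fun h => (by
          rcases hext q hqr with h' | h'
          · exact absurd h' h
          · exact absurd h' ((hR'e q hq).2)))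
    · rintro ⟨p, rfl, hp⟩
      exact hp

end GComp
/-- **Lemma 2.3.** If `g₁` and `g₂` lie in `Γ` then so does `g₂ ∘ g₁`; similarly for
`Γ⁺`, `Γ⁻` and `Γ±`. -/
theorem Gamma_comp (g₁ g₂ : ℚ → ℚ) :
    (Gamma g₁ → Gamma g₂ → Gamma (g₂ ∘ g₁)) ∧
    (GammaP g₁ → GammaP g₂ → GammaP (g₂ ∘ g₁)) ∧
    (GammaM g₁ → GammaM g₂ → GammaM (g₂ ∘ g₁)) ∧
    (GammaPM g₁ → GammaPM g₂ → GammaPM (g₂ ∘ g₁)) := by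
  refine ⟨?_, ?_, ?_, ?_⟩
  · -- Γ
    rintro ⟨hm₁, R₁, hd₁, D₁⟩ ⟨hm₂, R₂, hd₂, D₂⟩
    refine ⟨hm₂.comp hm₁, ?_⟩
    have idcongr : ∀ (R : ℚ → Prop) (q : ℚ), R q ↔ ∃ p : ℚ, q = id p ∧ R p :=
      fun R q => ⟨fun h => ⟨q, rfl, h⟩, fun ⟨p, hp, h⟩ => hp ▸ h⟩
    obtain ⟨R, hR, hD⟩ := GComp.transfer (ι := ℚ) id strictMono_id
      (fun x y h => exists_between h)
      (fun q hq => absurd ⟨q, rfl⟩ hq)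
      (fun p => ⟨not_isMax p, not_isMin p⟩)
      hm₂ hd₁ hd₂ (GComp.Decomp.congr (idcongr R₁) D₁) (GComp.Decomp.congr (idcongr R₂) D₂)
    exact ⟨R, hR, GComp.Decomp.congr (fun q => (idcongr R q).symm) hD⟩
  · -- Γ⁺
    rintro ⟨hm₁, R₁, hd₁, D₁⟩ ⟨hm₂, R₂, hd₂, D₂⟩
    refine ⟨hm₂.comp hm₁, ?_⟩
    obtain ⟨R, hR, hD⟩ := GComp.transfer (ι := WithTop ℚ)
      (fun p : ℚ => (p : WithTop ℚ))
      (fun a b hab => WithTop.coe_lt_coe.mpr hab)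
      (by
        intro x y h
        cases x using WithTop.recTopCoe with
        | top => exact absurd h not_top_lt
        | coe a =>
          cases y using WithTop.recTopCoe with
          | top => exact ⟨a + 1, WithTop.coe_lt_coe.mpr (lt_add_one a), WithTop.coe_lt_top _⟩
          | coe b =>
            obtain ⟨m, h1, h2⟩ := exists_between (WithTop.coe_lt_coe.mp h)
            exact ⟨m, WithTop.coe_lt_coe.mpr h1, WithTop.coe_lt_coe.mpr h2⟩)
      (by
        intro q hq
        cases q using WithTop.recTopCoe with
        | top => exact Or.inl isMax_top
        | coe a => exact absurd ⟨a, rfl⟩ hq)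
      (fun p => ⟨not_isMax_iff.mpr ⟨((p + 1 : ℚ) : WithTop ℚ),
          WithTop.coe_lt_coe.mpr (lt_add_one p)⟩,
        not_isMin_iff.mpr ⟨((p - 1 : ℚ) : WithTop ℚ),
          WithTop.coe_lt_coe.mpr (sub_one_lt p)⟩⟩)
      hm₂ hd₁ hd₂ D₁ D₂
    exact ⟨R, hR, hD⟩
  · -- Γ⁻
    rintro ⟨hm₁, R₁, hd₁, D₁⟩ ⟨hm₂, R₂, hd₂, D₂⟩
    refine ⟨hm₂.comp hm₁, ?_⟩
    obtain ⟨R, hR, hD⟩ := GComp.transfer (ι := WithBot ℚ)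
      (fun p : ℚ => (p : WithBot ℚ))
      (fun a b hab => WithBot.coe_lt_coe.mpr hab)
      (by
        intro x y h
        cases y using WithBot.recBotCoe with
        | bot => exact absurd h (not_lt.mpr bot_le)
        | coe b =>
          cases x using WithBot.recBotCoe with
          | bot => exact ⟨b - 1, WithBot.bot_lt_coe _, WithBot.coe_lt_coe.mpr (sub_one_lt b)⟩
          | coe a =>
            obtain ⟨m, h1, h2⟩ := exists_between (WithBot.coe_lt_coe.mp h)
            exact ⟨m, WithBot.coe_lt_coe.mpr h1, WithBot.coe_lt_coe.mpr h2⟩)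
      (by
        intro q hq
        cases q using WithBot.recBotCoe with
        | bot => exact Or.inr isMin_bot
        | coe a => exact absurd ⟨a, rfl⟩ hq)
      (fun p => ⟨not_isMax_iff.mpr ⟨((p + 1 : ℚ) : WithBot ℚ),
          WithBot.coe_lt_coe.mpr (lt_add_one p)⟩,
        not_isMin_iff.mpr ⟨((p - 1 : ℚ) : WithBot ℚ),
          WithBot.coe_lt_coe.mpr (sub_one_lt p)⟩⟩)
      hm₂ hd₁ hd₂ D₁ D₂
    exact ⟨R, hR, hD⟩
  · -- Γ±
    rintro ⟨hm₁, R₁, hd₁, D₁⟩ ⟨hm₂, R₂, hd₂, D₂⟩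
    refine ⟨hm₂.comp hm₁, ?_⟩
    have hmaxtop : IsMax (((⊤ : WithTop ℚ) : WithBot (WithTop ℚ))) := by
      intro b _
      cases b using WithBot.recBotCoe with
      | bot => exact bot_le
      | coe b' => exact WithBot.coe_le_coe.mpr le_top
    obtain ⟨R, hR, hD⟩ := GComp.transfer (ι := WithBot (WithTop ℚ))
      (fun p : ℚ => ((p : WithTop ℚ) : WithBot (WithTop ℚ)))
      (fun a b hab => WithBot.coe_lt_coe.mpr (WithTop.coe_lt_coe.mpr hab))
      (by
        intro x y h
        cases x using WithBot.recBotCoe with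
        | bot =>
          cases y using WithBot.recBotCoe with
          | bot => exact absurd h (lt_irrefl _)
          | coe y' =>
            cases y' using WithTop.recTopCoe with
            | top => exact ⟨0, WithBot.bot_lt_coe _,
                WithBot.coe_lt_coe.mpr (WithTop.coe_lt_top 0)⟩
            | coe b => exact ⟨b - 1, WithBot.bot_lt_coe _,
                WithBot.coe_lt_coe.mpr (WithTop.coe_lt_coe.mpr (sub_one_lt b))⟩
        | coe x' =>
          cases y using WithBot.recBotCoe with
          | bot => exact absurd h (not_lt.mpr bot_le)
          | coe y' =>
            cases x' using WithTop.recTopCoe with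
            | top => exact absurd h (not_lt.mpr (WithBot.coe_le_coe.mpr le_top))
            | coe a =>
              cases y' using WithTop.recTopCoe with
              | top => exact ⟨a + 1,
                  WithBot.coe_lt_coe.mpr (WithTop.coe_lt_coe.mpr (lt_add_one a)),
                  WithBot.coe_lt_coe.mpr (WithTop.coe_lt_top _)⟩
              | coe b =>
                obtain ⟨m, h1, h2⟩ :=
                  exists_between (WithTop.coe_lt_coe.mp (WithBot.coe_lt_coe.mp h))
                exact ⟨m, WithBot.coe_lt_coe.mpr (WithTop.coe_lt_coe.mpr h1),
                  WithBot.coe_lt_coe.mpr (WithTop.coe_lt_coe.mpr h2)⟩)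
      (by
        intro q hq
        cases q using WithBot.recBotCoe with
        | bot => exact Or.inr isMin_bot
        | coe q' =>
          cases q' using WithTop.recTopCoe with
          | top => exact Or.inl hmaxtop
          | coe a => exact absurd ⟨a, rfl⟩ hq)
      (fun p => ⟨not_isMax_iff.mpr ⟨(((p + 1 : ℚ) : WithTop ℚ) : WithBot (WithTop ℚ)),
          WithBot.coe_lt_coe.mpr (WithTop.coe_lt_coe.mpr (lt_add_one p))⟩,
        not_isMin_iff.mpr ⟨(⊥ : WithBot (WithTop ℚ)), WithBot.bot_lt_coe _⟩⟩)
      hm₂ hd₁ hd₂ D₁ D₂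
    exact ⟨R, hR, hD⟩
end

section
/- For any f ∈ M whose image is coterminal in ℚ (that is, for every x ∈ ℚ there are u, v ∈ im(f) with u ≤ x ≤ v), there exists g ∈ Γ such that g ∘ f ∈ Γ. -/
open Set

noncomputable section
namespace L24

abbrev X : Type := Lex (ℚ × ℚ)

instance : Countable X := inferInstanceAs (Countable (ℚ × ℚ))

def E : X ≃o ℚ := (Order.iso_of_countable_dense X ℚ).some

/-- point of `X` -/
def pt (a b : ℚ) : X := toLex (a, b)

lemma pt_lt_pt {a b c d : ℚ} : pt a b < pt c d ↔ a < c ∨ (a = c ∧ b < d) :=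
  Prod.Lex.lt_iff

lemma pt_le_pt {a b c d : ℚ} : pt a b ≤ pt c d ↔ a < c ∨ (a = c ∧ b ≤ d) :=
  Prod.Lex.le_iff

lemma pt_fst (a b : ℚ) : (ofLex (pt a b)).1 = a := rfl
lemma pt_snd (a b : ℚ) : (ofLex (pt a b)).2 = b := rfl

lemma pt_eta (x : X) : pt (ofLex x).1 (ofLex x).2 = x := rfl

/-- the copy of `W` on the axis -/
def V (W : Set ℚ) : Set X := {x : X | (ofLex x).2 = 0 ∧ (ofLex x).1 ∈ W}

lemma mem_V {W : Set ℚ} {x : X} : x ∈ V W ↔ (ofLex x).2 = 0 ∧ (ofLex x).1 ∈ W := Iff.rfl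

lemma pt_mem_V {W : Set ℚ} {w : ℚ} (hw : w ∈ W) : pt w 0 ∈ V W := ⟨rfl, hw⟩

lemma V_eq_pt {W : Set ℚ} {x : X} (hx : x ∈ V W) : x = pt (ofLex x).1 0 := by
  conv_lhs => rw [← pt_eta x, hx.1]

/-- `x ∼ y` : at most one point of `V W` lies (weakly) between `x` and `y`. -/
def sim (W : Set ℚ) (x y : X) : Prop :=
  (V W ∩ Set.Icc (min x y) (max x y)).Subsingleton

lemma sim_refl (W : Set ℚ) (x : X) : sim W x x := by
  intro a ha b hb
  simp only [min_self, max_self, Set.Icc_self, Set.mem_inter_iff, Set.mem_singleton_iff] at ha hb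
  rw [ha.2, hb.2]

lemma sim_symm {W : Set ℚ} {x y : X} (h : sim W x y) : sim W y x := by
  rwa [sim, min_comm, max_comm]

lemma sim_of_le {W : Set ℚ} {x y : X} (hxy : x ≤ y) :
    sim W x y ↔ (V W ∩ Set.Icc x y).Subsingleton := by
  rw [sim, min_eq_left hxy, max_eq_right hxy]

/-- convexity of `∼`-classes -/
lemma sim_sub {W : Set ℚ} {x y x' y' : X} (h : sim W x y) (hx : min x y ≤ min x' y')
    (hy : max x' y' ≤ max x y) : sim W x' y' :=
  Set.Subsingleton.anti h (Set.inter_subset_inter_right _ (Set.Icc_subset_Icc hx hy))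

lemma not_sim_of_two {W : Set ℚ} {x y v v' : X} (hv : v ∈ V W) (hv' : v' ∈ V W)
    (h1 : min x y ≤ v) (h2 : v < v') (h3 : v' ≤ max x y) : ¬ sim W x y := by
  intro hs
  exact absurd (hs ⟨hv, h1, le_of_lt (lt_of_lt_of_le h2 h3)⟩
    ⟨hv', le_trans h1 (le_of_lt h2), h3⟩) (ne_of_lt h2)

lemma exists_two_of_not_sim {W : Set ℚ} {x y : X} (h : ¬ sim W x y) :
    ∃ v ∈ V W, ∃ v' ∈ V W, min x y ≤ v ∧ v < v' ∧ v' ≤ max x y := by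
  have h' : ¬ (V W ∩ Set.Icc (min x y) (max x y)).Subsingleton := h
  rw [Set.not_subsingleton_iff] at h'
  obtain ⟨a, ha, b, hb, hne⟩ := h'
  rcases lt_or_gt_of_ne hne with hlt | hlt
  · exact ⟨a, ha.1, b, hb.1, ha.2.1, hlt, hb.2.2⟩
  · exact ⟨b, hb.1, a, ha.1, hb.2.1, hlt, ha.2.2⟩


/-- the hypotheses on `W` needed for the master lemma -/
structure Nice (W : Set ℚ) : Prop where
  dense3 : ∀ a ∈ W, ∀ b ∈ W, a < b → ∃ c ∈ W, a < c ∧ c < b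
  unbA : ∀ x : ℚ, ∃ w ∈ W, x < w
  unbB : ∀ x : ℚ, ∃ w ∈ W, w < x
  bs : ∀ a ∈ W, ∀ b ∈ W, a < b → ∃ t : ℚ, t ∉ W ∧ a < t ∧ t < b ∧
        (∀ q ∈ W, q < t → ∃ q' ∈ W, q < q' ∧ q' < t) ∧
        (∀ q ∈ W, t < q → ∃ q' ∈ W, t < q' ∧ q' < q)

variable {W : Set ℚ}

lemma V_lt_fst {v v' : X} (hv : v ∈ V W) (hv' : v' ∈ V W) (h : v < v') :
    (ofLex v).1 < (ofLex v').1 := by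
  rw [V_eq_pt hv, V_eq_pt hv'] at h
  rcases pt_lt_pt.1 h with h1 | h1
  · exact h1
  · exact absurd h1.2 (lt_irrefl 0)

lemma V_between (hW : Nice W) {v v' : X} (hv : v ∈ V W) (hv' : v' ∈ V W) (h : v < v') :
    ∃ u ∈ V W, v < u ∧ u < v' := by
  obtain ⟨c, hc, h1, h2⟩ := hW.dense3 _ hv.2 _ hv'.2 (V_lt_fst hv hv' h)
  refine ⟨pt c 0, pt_mem_V hc, ?_, ?_⟩
  · rw [V_eq_pt hv]; exact pt_lt_pt.2 (Or.inl h1)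
  · rw [V_eq_pt hv']; exact pt_lt_pt.2 (Or.inl h2)

/-- transitivity in the ordered case -/
lemma sim_trans_ord (hW : Nice W) {x y z : X} (hxy : x ≤ y) (hyz : y ≤ z)
    (h1 : sim W x y) (h2 : sim W y z) : sim W x z := by
  by_contra hns
  obtain ⟨v, hv, v', hv', hge, hlt, hle⟩ := exists_two_of_not_sim hns
  rw [min_eq_left (le_trans hxy hyz)] at hge
  rw [max_eq_right (le_trans hxy hyz)] at hle
  rw [sim_of_le hxy] at h1
  rw [sim_of_le hyz] at h2
  rcases le_or_gt v' y with h' | h'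
  · exact absurd (h1 ⟨hv, hge, le_trans (le_of_lt hlt) h'⟩ ⟨hv', le_trans hge (le_of_lt hlt), h'⟩)
      (ne_of_lt hlt)
  rcases le_or_gt y v with h'' | h''
  · exact absurd (h2 ⟨hv, h'', le_trans (le_of_lt hlt) hle⟩ ⟨hv', le_trans h'' (le_of_lt hlt), hle⟩)
      (ne_of_lt hlt)
  obtain ⟨u, hu, huv, huv'⟩ := V_between hW hv hv' hlt
  rcases le_or_gt u y with h3 | h3
  · exact absurd (h1 ⟨hv, hge, le_trans (le_of_lt huv) h3⟩ ⟨hu, le_trans hge (le_of_lt huv), h3⟩)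
      (ne_of_lt huv)
  · exact absurd (h2 ⟨hu, le_of_lt h3, le_trans (le_of_lt huv') hle⟩
      ⟨hv', le_trans (le_of_lt h3) (le_of_lt huv'), hle⟩) (ne_of_lt huv')

lemma sim_trans (hW : Nice W) {x y z : X} (h1 : sim W x y) (h2 : sim W y z) : sim W x z := by
  rcases le_total x z with hxz | hxz
  · rcases le_total y x with h3 | h3
    · -- y ≤ x ≤ z : Icc x z ⊆ Icc y z
      exact sim_sub h2 (by simp [min_eq_left, hxz, le_trans h3 hxz, h3])
        (by simp [max_eq_right, hxz, le_trans h3 hxz])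
    · rcases le_total z y with h4 | h4
      · -- x ≤ z ≤ y : Icc x z ⊆ Icc x y
        exact sim_sub h1 (by simp [min_eq_left, hxz, h3, le_trans hxz h4])
          (by simp [max_eq_right, hxz, h4, le_trans hxz h4])
      · exact sim_trans_ord hW h3 h4 h1 h2
  · rcases le_total x y with h3 | h3
    · -- z ≤ x ≤ y : Icc z x ⊆ Icc z y
      exact sim_sub (sim_symm h2) (by simp [min_eq_right, hxz, le_trans hxz h3])
        (by simp [max_eq_left, hxz, h3, le_trans hxz h3])
    · rcases le_total y z with h4 | h4
      ·
        exact sim_sub (sim_symm h1) (by simp [min_eq_right, hxz, h4, le_trans h4 hxz])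
          (by simp [max_eq_left, hxz, h3, le_trans h4 hxz])
      · exact sim_symm (sim_trans_ord hW h4 h3 (sim_symm h2) (sim_symm h1))


/-- the raw order on classes -/
def leW (W : Set ℚ) (x y : X) : Prop := x ≤ y ∨ sim W x y

lemma leW_refl (x : X) : leW W x x := Or.inl le_rfl

lemma leW_of_sim {x y : X} (h : sim W x y) : leW W x y := Or.inr h

lemma leW_trans (hW : Nice W) {x y z : X} (h1 : leW W x y) (h2 : leW W y z) : leW W x z := by
  rcases h1 with h1 | h1 <;> rcases h2 with h2 | h2
  · exact Or.inl (le_trans h1 h2)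
  · rcases le_total x z with h | h
    · exact Or.inl h
    · -- z < x, x ≤ y, sim y z : Icc z x ⊆ Icc z y
      exact Or.inr (sim_symm (sim_sub (sim_symm h2)
        (by rw [min_eq_left (le_trans h h1), min_eq_left h])
        (by rw [max_eq_right h, max_eq_right (le_trans h h1)]; exact h1)))
  · rcases le_total x z with h | h
    · exact Or.inl h
    · -- z ≤ x, sim x y, y ≤ z : Icc z x ⊆ Icc y x
      exact Or.inr (sim_symm (sim_sub (sim_symm h1)
        (by rw [min_eq_left (le_trans h2 h), min_eq_left h]; exact h2)
        (by rw [max_eq_right h, max_eq_right (le_trans h2 h)])))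
  · exact Or.inr (sim_trans hW h1 h2)

lemma leW_antisymm (hW : Nice W) {x y : X} (h1 : leW W x y) (h2 : leW W y x) : sim W x y := by
  rcases h1 with h1 | h1
  · rcases h2 with h2 | h2
    · rw [le_antisymm h1 h2]; exact sim_refl W y
    · exact sim_symm h2
  · exact h1

lemma leW_total (x y : X) : leW W x y ∨ leW W y x := by
  rcases le_total x y with h | h
  · exact Or.inl (Or.inl h)
  · exact Or.inr (Or.inl h)

/-- the setoid of `∼`-classes -/
def simStd (W : Set ℚ) (hW : Nice W) : Setoid X :=
  ⟨sim W, ⟨sim_refl W, sim_symm, sim_trans hW⟩⟩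

/-- the quotient (index order) -/
def Qt (W : Set ℚ) (hW : Nice W) : Type := Quotient (simStd W hW)

variable {hW : Nice W}

def mkQ (hW : Nice W) (x : X) : Qt W hW := Quotient.mk (simStd W hW) x

lemma mkQ_eq_iff {x y : X} : mkQ hW x = mkQ hW y ↔ sim W x y :=
  ⟨fun h => Quotient.exact h, fun h => Quotient.sound h⟩

lemma mkQ_surj (q : Qt W hW) : ∃ x, mkQ hW x = q := Quotient.exists_rep q

instance : LinearOrder (Qt W hW) where
  le := Quotient.lift₂ (leW W) (by
    intro a b a' b' ha hb
    refine propext ⟨fun h => ?_, fun h => ?_⟩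
    · exact leW_trans hW (leW_of_sim (sim_symm ha)) (leW_trans hW h (leW_of_sim hb))
    · exact leW_trans hW (leW_of_sim ha) (leW_trans hW h (leW_of_sim (sim_symm hb))))
  le_refl := fun q => Quotient.inductionOn q leW_refl
  le_trans := fun a b c => Quotient.inductionOn₃ a b c (fun x y z => leW_trans hW)
  le_antisymm := fun a b => Quotient.inductionOn₂ a b
    (fun x y h1 h2 => Quotient.sound (leW_antisymm hW h1 h2))
  le_total := fun a b => Quotient.inductionOn₂ a b leW_total
  toDecidableLE := fun _ _ => Classical.dec _

lemma mkQ_le_iff {x y : X} : mkQ hW x ≤ mkQ hW y ↔ leW W x y := Iff.rfl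

lemma mkQ_lt_iff {x y : X} : mkQ hW x < mkQ hW y ↔ x < y ∧ ¬ sim W x y := by
  rw [lt_iff_le_not_ge, mkQ_le_iff, mkQ_le_iff]
  constructor
  · rintro ⟨h1 | h1, h2⟩
    · refine ⟨lt_of_le_not_ge h1 (fun h => h2 (Or.inl h)), fun h => h2 (Or.inr (sim_symm h))⟩
    · exact absurd (Or.inr (sim_symm h1)) h2
  · rintro ⟨h1, h2⟩
    exact ⟨Or.inl (le_of_lt h1), fun h => by
      rcases h with h | h
      · exact absurd (le_antisymm (le_of_lt h1) h) (fun he => h2 (he ▸ sim_refl W y))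
      · exact h2 (sim_symm h)⟩

lemma mkQ_lt_of {x y : X} (h1 : x < y) (h2 : ¬ sim W x y) : mkQ hW x < mkQ hW y :=
  mkQ_lt_iff.2 ⟨h1, h2⟩

lemma lt_of_mkQ_lt {x y : X} (h : mkQ hW x < mkQ hW y) : x < y := (mkQ_lt_iff.1 h).1

instance : Countable (Qt W hW) := Quotient.countable

instance : Nonempty (Qt W hW) := ⟨mkQ hW (pt 0 0)⟩


/-- a chain of five `V`-points witnessing non-similarity, inside `[x,y]` -/
lemma chain5 (hW : Nice W) {x y : X} (h : mkQ hW x < mkQ hW y) :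
    ∃ v1 ∈ V W, ∃ a ∈ V W, ∃ b ∈ V W, ∃ c ∈ V W, ∃ v2 ∈ V W,
      x ≤ v1 ∧ v1 < a ∧ a < b ∧ b < c ∧ c < v2 ∧ v2 ≤ y := by
  obtain ⟨hlt, hns⟩ := mkQ_lt_iff.1 h
  obtain ⟨v1, hv1, v2, hv2, hge, hlt2, hle⟩ := exists_two_of_not_sim hns
  rw [min_eq_left (le_of_lt hlt)] at hge
  rw [max_eq_right (le_of_lt hlt)] at hle
  obtain ⟨b, hb, h1b, h2b⟩ := V_between hW hv1 hv2 hlt2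
  obtain ⟨a, ha, h1a, h2a⟩ := V_between hW hv1 hb h1b
  obtain ⟨c, hc, h1c, h2c⟩ := V_between hW hb hv2 h2b
  exact ⟨v1, hv1, a, ha, b, hb, c, hc, v2, hv2, hge, h1a, h2a, h1c, h2c, hle⟩

lemma red_between (hW : Nice W) {x y : X} (h : mkQ hW x < mkQ hW y) :
    ∃ b ∈ V W, mkQ hW x < mkQ hW b ∧ mkQ hW b < mkQ hW y := by
  obtain ⟨v1, hv1, a, ha, b, hb, c, hc, v2, hv2, h0, h1, h2, h3, h4, h5⟩ := chain5 hW h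
  refine ⟨b, hb, mkQ_lt_of (lt_of_le_of_lt h0 (lt_trans h1 h2)) ?_,
    mkQ_lt_of (lt_of_lt_of_le (lt_trans h3 h4) h5) ?_⟩
  · exact not_sim_of_two hv1 ha (le_trans (min_le_left _ _) h0) h1
      (le_trans (le_of_lt h2) (le_max_right _ _))
  · exact not_sim_of_two hc hv2 (le_trans (min_le_left _ _) (le_of_lt h3)) h4
      (le_trans h5 (le_max_right _ _))

/-- a blue point: its class contains no point of `V` -/
def Blue (W : Set ℚ) (z : X) : Prop := ∀ v ∈ V W, ¬ sim W v z

lemma blue_between (hW : Nice W) {x y : X} (h : mkQ hW x < mkQ hW y) :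
    ∃ z : X, Blue W z ∧ mkQ hW x < mkQ hW z ∧ mkQ hW z < mkQ hW y := by
  obtain ⟨v1, hv1, a, ha, b, hb, c, hc, v2, hv2, h0, h1, h2, h3, h4, h5⟩ := chain5 hW h
  obtain ⟨t, htW, hta, htc, hmax, hmin⟩ :=
    hW.bs _ ha.2 _ hc.2 (V_lt_fst ha hc (lt_trans h2 h3))
  refine ⟨pt t 0, ?_, ?_, ?_⟩
  · rintro v hv hsim
    rcases lt_trichotomy (ofLex v).1 t with hvt | hvt | hvt
    · obtain ⟨q', hq', hq1, hq2⟩ := hmax _ hv.2 hvt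
      refine not_sim_of_two hv (pt_mem_V hq') (min_le_left _ _) ?_ ?_ hsim
      · conv_lhs => rw [V_eq_pt hv]
        exact pt_lt_pt.2 (Or.inl hq1)
      · calc pt q' 0 ≤ pt t 0 := pt_le_pt.2 (Or.inl hq2)
          _ ≤ max v (pt t 0) := le_max_right _ _
    · exact htW (hvt ▸ hv.2)
    · obtain ⟨q', hq', hq1, hq2⟩ := hmin _ hv.2 hvt
      refine not_sim_of_two (pt_mem_V hq') hv ?_ ?_ (le_max_left _ _) hsim
      · calc min v (pt t 0) ≤ pt t 0 := min_le_right _ _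
          _ ≤ pt q' 0 := pt_le_pt.2 (Or.inl hq1)
      · conv_rhs => rw [V_eq_pt hv]
        exact pt_lt_pt.2 (Or.inl hq2)
  · have haz : a < pt t 0 := by rw [V_eq_pt ha]; exact pt_lt_pt.2 (Or.inl hta)
    refine mkQ_lt_of (lt_of_le_of_lt h0 (lt_trans h1 haz)) ?_
    exact not_sim_of_two hv1 ha (le_trans (min_le_left _ _) h0) h1
      (le_trans (le_of_lt haz) (le_max_right _ _))
  · have hzc : pt t 0 < c := by rw [V_eq_pt hc]; exact pt_lt_pt.2 (Or.inl htc)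
    refine mkQ_lt_of (lt_of_lt_of_le (lt_trans hzc h4) h5) ?_
    exact not_sim_of_two hc hv2 (le_trans (min_le_left _ _) (le_of_lt hzc)) h4
      (le_trans h5 (le_max_right _ _))

instance : DenselyOrdered (Qt W hW) where
  dense := by
    intro q r h
    obtain ⟨x, rfl⟩ := mkQ_surj q
    obtain ⟨y, rfl⟩ := mkQ_surj r
    obtain ⟨b, _, h1, h2⟩ := red_between hW h
    exact ⟨mkQ hW b, h1, h2⟩

instance : NoMaxOrder (Qt W hW) where
  exists_gt := by
    intro q
    obtain ⟨x, rfl⟩ := mkQ_surj q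
    obtain ⟨w1, hw1, hx1⟩ := hW.unbA (ofLex x).1
    obtain ⟨w2, hw2, h12⟩ := hW.unbA w1
    have hxw1 : x < pt w1 0 := by
      conv_lhs => rw [← pt_eta x]
      exact pt_lt_pt.2 (Or.inl hx1)
    have hw12 : pt w1 0 < pt w2 0 := pt_lt_pt.2 (Or.inl h12)
    refine ⟨mkQ hW (pt w2 0), mkQ_lt_of (lt_trans hxw1 hw12) ?_⟩
    exact not_sim_of_two (pt_mem_V hw1) (pt_mem_V hw2)
      (le_trans (min_le_left _ _) (le_of_lt hxw1)) hw12 (le_max_right _ _)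

instance : NoMinOrder (Qt W hW) where
  exists_lt := by
    intro q
    obtain ⟨x, rfl⟩ := mkQ_surj q
    obtain ⟨w1, hw1, hx1⟩ := hW.unbB (ofLex x).1
    obtain ⟨w2, hw2, h12⟩ := hW.unbB w1
    have hxw1 : pt w1 0 < x := by
      conv_rhs => rw [← pt_eta x]
      exact pt_lt_pt.2 (Or.inl hx1)
    have hw12 : pt w2 0 < pt w1 0 := pt_lt_pt.2 (Or.inl h12)
    refine ⟨mkQ hW (pt w2 0), mkQ_lt_of (lt_trans hw12 hxw1) ?_⟩
    exact not_sim_of_two (pt_mem_V hw2) (pt_mem_V hw1)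
      (min_le_left _ _) hw12 (le_trans (le_of_lt hxw1) (le_max_right _ _))


/-- whole columns are `∼`-equivalent -/
lemma sim_column (W : Set ℚ) (t s s' : ℚ) : sim W (pt t s) (pt t s') := by
  intro u hu u' hu'
  have key : ∀ v ∈ V W ∩ Set.Icc (min (pt t s) (pt t s')) (max (pt t s) (pt t s')),
      v = pt t 0 := by
    rintro v ⟨hv, hv1, hv2⟩
    have h1 : (ofLex v).1 = t := by
      rcases le_total s s' with h | h
      · rw [min_eq_left (pt_le_pt.2 (Or.inr ⟨rfl, h⟩))] at hv1
        rw [max_eq_right (pt_le_pt.2 (Or.inr ⟨rfl, h⟩))] at hv2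
        rw [V_eq_pt hv] at hv1 hv2
        rcases pt_le_pt.1 hv1 with h' | h'
        · rcases pt_le_pt.1 hv2 with h'' | h''
          · exact absurd (lt_trans h' h'') (lt_irrefl t)
          · exact h''.1
        · exact h'.1.symm
      · rw [min_eq_right (pt_le_pt.2 (Or.inr ⟨rfl, h⟩))] at hv1
        rw [max_eq_left (pt_le_pt.2 (Or.inr ⟨rfl, h⟩))] at hv2
        rw [V_eq_pt hv] at hv1 hv2
        rcases pt_le_pt.1 hv1 with h' | h'
        · rcases pt_le_pt.1 hv2 with h'' | h''
          · exact absurd (lt_trans h' h'') (lt_irrefl t)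
          · exact h''.1
        · exact h'.1.symm
    rw [V_eq_pt hv, h1]
  rw [key u hu, key u' hu']

lemma sim_self_column (x : X) (s : ℚ) : sim W x (pt (ofLex x).1 s) := by
  have := sim_column W (ofLex x).1 (ofLex x).2 s
  rwa [pt_eta] at this

lemma exists_gt_same_class (x : X) : ∃ m : X, x < m ∧ sim W x m := by
  refine ⟨pt (ofLex x).1 ((ofLex x).2 + 1), ?_, sim_self_column x _⟩
  conv_lhs => rw [← pt_eta x]
  exact pt_lt_pt.2 (Or.inr ⟨rfl, by linarith⟩)

lemma exists_lt_same_class (x : X) : ∃ m : X, m < x ∧ sim W x m := by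
  refine ⟨pt (ofLex x).1 ((ofLex x).2 - 1), ?_, sim_self_column x _⟩
  conv_rhs => rw [← pt_eta x]
  exact pt_lt_pt.2 (Or.inr ⟨rfl, by linarith⟩)

lemma exists_between_same_class {u v : X} (h : u < v) :
    ∃ m : X, u < m ∧ m < v ∧ sim W u m := by
  have h' : pt (ofLex u).1 (ofLex u).2 < pt (ofLex v).1 (ofLex v).2 := by
    rw [pt_eta, pt_eta]; exact h
  rcases pt_lt_pt.1 h' with hc | hc
  · refine ⟨pt (ofLex u).1 ((ofLex u).2 + 1), ?_, ?_, sim_self_column u _⟩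
    · conv_lhs => rw [← pt_eta u]
      exact pt_lt_pt.2 (Or.inr ⟨rfl, by linarith⟩)
    · conv_rhs => rw [← pt_eta v]
      exact pt_lt_pt.2 (Or.inl hc)
  · refine ⟨pt (ofLex u).1 (((ofLex u).2 + (ofLex v).2) / 2), ?_, ?_, sim_self_column u _⟩
    · conv_lhs => rw [← pt_eta u]
      exact pt_lt_pt.2 (Or.inr ⟨rfl, by linarith [hc.2]⟩)
    · conv_rhs => rw [← pt_eta v]
      exact pt_lt_pt.2 (Or.inr ⟨hc.1, by linarith [hc.2]⟩)

section Master

variable (hW : Nice W)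

/-- the index isomorphism -/
def ind (hW : Nice W) : Qt W hW ≃o ℚ := (Order.iso_of_countable_dense (Qt W hW) ℚ).some

/-- class of a rational (via `E`) -/
def cls (hW : Nice W) (a : ℚ) : Qt W hW := mkQ hW (E.symm a)

/-- the pieces -/
def Ap (hW : Nice W) (r : ℚ) : Set ℚ := {a : ℚ | ind hW (cls hW a) = r}

/-- the colouring -/
def Rc (hW : Nice W) (r : ℚ) : Prop := ∃ v ∈ V W, ind hW (mkQ hW v) = r

theorem master (hW : Nice W) (g : ℚ → ℚ) (hg : StrictMono g)
    (hr : Set.range g = E '' (V W)) : Gamma g := by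
  refine ⟨hg, Rc hW, ?_, Ap hW, ?_, ?_, ?_, ?_, ?_, ?_⟩
  · -- DenseColouring
    intro x y hxy
    have hxy' : ind hW ((ind hW).symm x) < ind hW ((ind hW).symm y) := by
      rwa [OrderIso.apply_symm_apply, OrderIso.apply_symm_apply]
    obtain ⟨u, hu⟩ := mkQ_surj ((ind hW).symm x)
    obtain ⟨u', hu'⟩ := mkQ_surj ((ind hW).symm y)
    have hlt : mkQ hW u < mkQ hW u' := by
      rw [hu, hu']; exact (ind hW).lt_iff_lt.1 hxy'
    constructor
    · obtain ⟨b, hb, h1, h2⟩ := red_between hW hlt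
      refine ⟨ind hW (mkQ hW b), ?_, ?_, ⟨b, hb, rfl⟩⟩
      · rw [← OrderIso.apply_symm_apply (ind hW) x, ← hu]
        exact (ind hW).lt_iff_lt.2 h1
      · rw [← OrderIso.apply_symm_apply (ind hW) y, ← hu']
        exact (ind hW).lt_iff_lt.2 h2
    · obtain ⟨z, hz, h1, h2⟩ := blue_between hW hlt
      refine ⟨ind hW (mkQ hW z), ?_, ?_, ?_⟩
      · rw [← OrderIso.apply_symm_apply (ind hW) x, ← hu]
        exact (ind hW).lt_iff_lt.2 h1
      · rw [← OrderIso.apply_symm_apply (ind hW) y, ← hu']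
        exact (ind hW).lt_iff_lt.2 h2
      · rintro ⟨v, hv, hveq⟩
        exact hz v hv (mkQ_eq_iff.1 ((ind hW).injective hveq))
  · -- partition
    intro a
    exact ⟨ind hW (cls hW a), rfl, fun q hq => hq.symm⟩
  · -- ordering
    intro q r hqr a ha b hb
    have h0 : ind hW (cls hW a) < ind hW (cls hW b) := by
      rw [(ha : ind hW (cls hW a) = q), (hb : ind hW (cls hW b) = r)]; exact hqr
    have h1 : cls hW a < cls hW b := (ind hW).lt_iff_lt.1 h0
    have h2 : E.symm a < E.symm b := lt_of_mkQ_lt h1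
    exact E.symm.lt_iff_lt.1 h2
  · -- OrdConnected
    intro r
    refine ⟨fun a ha b hb c hc => ?_⟩
    have hab : cls hW a = cls hW b :=
      (ind hW).injective (by rw [(ha : ind hW (cls hW a) = r), (hb : ind hW (cls hW b) = r)])
    have hsim : sim W (E.symm a) (E.symm b) := mkQ_eq_iff.1 hab
    have h1 : E.symm a ≤ E.symm c := E.symm.le_iff_le.2 hc.1
    have h2 : E.symm c ≤ E.symm b := E.symm.le_iff_le.2 hc.2
    have hac : sim W (E.symm a) (E.symm c) := by
      refine sim_sub hsim ?_ ?_
      · rw [min_eq_left (le_trans h1 h2), min_eq_left h1]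
      · rw [max_eq_right (le_trans h1 h2), max_eq_right h1]; exact h2
    show ind hW (cls hW c) = r
    rw [← (ha : ind hW (cls hW a) = r)]
    congr 1
    exact (mkQ_eq_iff.2 hac).symm
  · -- each piece is a copy of ℚ
    intro r
    obtain ⟨u, hu⟩ := mkQ_surj ((ind hW).symm r)
    have hmem : ∀ x : X, mkQ hW x = mkQ hW u → E x ∈ Ap hW r := by
      intro x hx
      show ind hW (cls hW (E x)) = r
      rw [show cls hW (E x) = mkQ hW x from by unfold cls; rw [E.symm_apply_apply], hx, hu, OrderIso.apply_symm_apply]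
    have hmem' : ∀ a : ℚ, a ∈ Ap hW r → mkQ hW (E.symm a) = mkQ hW u := by
      intro a ha
      have h1 : ind hW (mkQ hW (E.symm a)) = r := ha
      have h2 : mkQ hW (E.symm a) = (ind hW).symm r := by
        rw [← h1, OrderIso.symm_apply_apply]
      rw [h2, ← hu]
    haveI : Nonempty (Ap hW r) := ⟨⟨E u, hmem u rfl⟩⟩
    haveI : DenselyOrdered (Ap hW r) := by
      constructor
      rintro ⟨a, ha⟩ ⟨b, hb⟩ hab
      have hab' : E.symm a < E.symm b := E.symm.lt_iff_lt.2 (by exact_mod_cast hab)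
      obtain ⟨m, h1, h2, h3⟩ := exists_between_same_class hab'
      have hc : E m ∈ Ap hW r :=
        hmem m (((mkQ_eq_iff.2 (sim_symm h3)).trans (hmem' a ha)))
      refine ⟨⟨E m, hc⟩, ?_, ?_⟩
      · show a < E m
        calc a = E (E.symm a) := (E.apply_symm_apply a).symm
          _ < E m := E.lt_iff_lt.2 h1
      · show E m < b
        calc E m < E (E.symm b) := E.lt_iff_lt.2 h2
          _ = b := E.apply_symm_apply b
    haveI : NoMaxOrder (Ap hW r) := by
      constructor
      rintro ⟨a, ha⟩
      obtain ⟨m, h1, h3⟩ := exists_gt_same_class (W := W) (E.symm a)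
      have hc : E m ∈ Ap hW r :=
        hmem m (((mkQ_eq_iff.2 (sim_symm h3)).trans (hmem' a ha)))
      refine ⟨⟨E m, hc⟩, ?_⟩
      show a < E m
      calc a = E (E.symm a) := (E.apply_symm_apply a).symm
        _ < E m := E.lt_iff_lt.2 h1
    haveI : NoMinOrder (Ap hW r) := by
      constructor
      rintro ⟨a, ha⟩
      obtain ⟨m, h1, h3⟩ := exists_lt_same_class (W := W) (E.symm a)
      have hc : E m ∈ Ap hW r :=
        hmem m (((mkQ_eq_iff.2 (sim_symm h3)).trans (hmem' a ha)))
      refine ⟨⟨E m, hc⟩, ?_⟩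
      show E m < a
      calc E m < E (E.symm a) := E.lt_iff_lt.2 h1
        _ = a := E.apply_symm_apply a
    exact Order.iso_of_countable_dense (Ap hW r) ℚ
  · -- red pieces contain exactly one image point
    intro r hred
    obtain ⟨v, hv, hvr⟩ := hred
    refine ⟨E v, ⟨?_, ?_⟩, ?_⟩
    · show ind hW (cls hW (E v)) = r
      rw [show cls hW (E v) = mkQ hW v from by unfold cls; rw [E.symm_apply_apply], hvr]
    · rw [hr]; exact ⟨v, hv, rfl⟩
    · rintro y ⟨hy1, hy2⟩
      rw [hr] at hy2
      obtain ⟨v', hv', rfl⟩ := hy2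
      have h1 : ind hW (mkQ hW v') = r := by
        have h0 : ind hW (cls hW (E v')) = r := hy1
        rwa [show cls hW (E v') = mkQ hW v' from by unfold cls; rw [E.symm_apply_apply]] at h0
      have h2 : sim W v' v := mkQ_eq_iff.1 ((ind hW).injective (h1.trans hvr.symm))
      have : v' = v := h2 ⟨hv', min_le_left _ _, le_max_left _ _⟩
        ⟨hv, min_le_right _ _, le_max_right _ _⟩
      rw [this]
  · -- blue pieces contain no image point
    intro r hblue
    ext y
    simp only [Set.mem_inter_iff, Set.mem_empty_iff_false, iff_false]
    rintro ⟨hy1, hy2⟩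
    rw [hr] at hy2
    obtain ⟨v', hv', rfl⟩ := hy2
    refine hblue ⟨v', hv', ?_⟩
    have h0 : ind hW (cls hW (E v')) = r := hy1
    rwa [show cls hW (E v') = mkQ hW v' from by unfold cls; rw [E.symm_apply_apply]] at h0
end Master

section Construction

/-- a two-sidedly non-attained cut of a dense set, avoiding the set -/
lemma exists_cut {P : Set ℚ} (hPd : ∀ a ∈ P, ∀ b ∈ P, a < b → ∃ c ∈ P, a < c ∧ c < b)
    {p p' : ℚ} (hp : p ∈ P) (hp' : p' ∈ P) (hpp : p < p') :
    ∃ α : ℝ, (p : ℝ) < α ∧ α < (p' : ℝ) ∧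
      (∀ q ∈ P, (q : ℝ) < α → ∃ r ∈ P, q < r ∧ (r : ℝ) < α) ∧
      (∀ q ∈ P, α < (q : ℝ) → ∃ r ∈ P, α < (r : ℝ) ∧ r < q) ∧
      (∀ q ∈ P, (q : ℝ) ≠ α) := by
  set S : Set ℚ := {q | q ∈ P ∧ p < q ∧ q < p'} with hS
  haveI : Nonempty S := by
    obtain ⟨c, hc, h1, h2⟩ := hPd p hp p' hp' hpp
    exact ⟨⟨c, hc, h1, h2⟩⟩
  haveI : DenselyOrdered S := by
    constructor
    rintro ⟨a, ha⟩ ⟨b, hb⟩ hab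
    obtain ⟨c, hc, h1, h2⟩ := hPd a ha.1 b hb.1 (by exact_mod_cast hab)
    exact ⟨⟨c, hc, lt_trans ha.2.1 h1, lt_trans h2 hb.2.2⟩, by exact_mod_cast h1, by exact_mod_cast h2⟩
  haveI : NoMinOrder S := by
    constructor
    rintro ⟨a, ha⟩
    obtain ⟨c, hc, h1, h2⟩ := hPd p hp a ha.1 ha.2.1
    exact ⟨⟨c, hc, h1, lt_trans h2 ha.2.2⟩, by exact_mod_cast h2⟩
  haveI : NoMaxOrder S := by
    constructor
    rintro ⟨a, ha⟩
    obtain ⟨c, hc, h1, h2⟩ := hPd a ha.1 p' hp' ha.2.2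
    exact ⟨⟨c, hc, lt_trans ha.2.1 h1, h2⟩, by exact_mod_cast h1⟩
  obtain ⟨φ⟩ := Order.iso_of_countable_dense S ℚ
  set A : Set S := {x | ((φ x : ℚ) : ℝ) < Real.sqrt 2} with hA
  set B : Set S := {x | Real.sqrt 2 < ((φ x : ℚ) : ℝ)} with hB
  have hsqrt0 : (0 : ℝ) < Real.sqrt 2 := Real.sqrt_pos.2 (by norm_num)
  have hsqrt2 : Real.sqrt 2 < 2 := by
    nlinarith [Real.sq_sqrt (by norm_num : (2:ℝ) ≥ 0), Real.sqrt_nonneg 2]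
  have hAB : ∀ x : S, x ∈ A ∨ x ∈ B := by
    intro x
    rcases lt_trichotomy ((φ x : ℚ) : ℝ) (Real.sqrt 2) with h | h | h
    · exact Or.inl h
    · exact absurd h.symm (irrational_sqrt_two.ne_rat _)
    · exact Or.inr h
  have hAne : A.Nonempty := ⟨φ.symm 0, by simp only [hA, Set.mem_setOf_eq, OrderIso.apply_symm_apply]; exact_mod_cast hsqrt0⟩
  have hBne : B.Nonempty := ⟨φ.symm 2, by simp only [hB, Set.mem_setOf_eq, OrderIso.apply_symm_apply]; exact_mod_cast hsqrt2⟩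
  have hAnomax : ∀ x ∈ A, ∃ y ∈ A, x < y := by
    intro x hx
    have hx' : ((φ x : ℚ):ℝ) < Real.sqrt 2 := hx
    obtain ⟨r, h1, h2⟩ := exists_rat_btwn hx' 
    refine ⟨φ.symm r, by simp only [hA, Set.mem_setOf_eq, OrderIso.apply_symm_apply]; exact h2, ?_⟩
    have : φ x < r := by exact_mod_cast h1
    calc x = φ.symm (φ x) := (φ.symm_apply_apply x).symm
      _ < φ.symm r := φ.symm.lt_iff_lt.2 this
  have hBnomin : ∀ x ∈ B, ∃ y ∈ B, y < x := by
    intro x hx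
    have hx' : Real.sqrt 2 < ((φ x : ℚ):ℝ) := hx
    obtain ⟨r, h1, h2⟩ := exists_rat_btwn hx' 
    refine ⟨φ.symm r, by simp only [hB, Set.mem_setOf_eq, OrderIso.apply_symm_apply]; exact h1, ?_⟩
    have : (r : ℚ) < φ x := by exact_mod_cast h2
    calc φ.symm r < φ.symm (φ x) := φ.symm.lt_iff_lt.2 this
      _ = x := φ.symm_apply_apply x
  set Ar : Set ℝ := (fun x : S => ((x : ℚ) : ℝ)) '' A with hAr
  set Br : Set ℝ := (fun x : S => ((x : ℚ) : ℝ)) '' B with hBr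
  have hArne : Ar.Nonempty := hAne.image _
  have hBrne : Br.Nonempty := hBne.image _
  have hArbdd : BddAbove Ar := by
    refine ⟨(p' : ℝ), ?_⟩
    rintro z ⟨x, _, rfl⟩
    show ((x : ℚ) : ℝ) ≤ (p' : ℝ)
    exact le_of_lt (by exact_mod_cast x.2.2.2)
  have hBrbdd : BddBelow Br := by
    refine ⟨(p : ℝ), ?_⟩
    rintro z ⟨x, _, rfl⟩
    show (p : ℝ) ≤ ((x : ℚ) : ℝ)
    exact le_of_lt (by exact_mod_cast x.2.2.1)
  have hALTB : ∀ x ∈ A, ∀ y ∈ B, (x : S) < y := by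
    intro x hx y hy
    have hx' : ((φ x : ℚ):ℝ) < Real.sqrt 2 := hx
    have hy' : Real.sqrt 2 < ((φ y : ℚ):ℝ) := hy
    have : φ x < φ y := by exact_mod_cast lt_trans hx' hy' 
    exact φ.lt_iff_lt.1 this
  set sA : ℝ := sSup Ar with hsA
  set sB : ℝ := sInf Br with hsB
  have hab : sA ≤ sB := by
    apply csSup_le hArne
    rintro z ⟨x, hx, rfl⟩
    apply le_csInf hBrne
    rintro w ⟨y, hy, rfl⟩
    show ((x : ℚ) : ℝ) ≤ ((y : ℚ) : ℝ)
    exact_mod_cast le_of_lt (hALTB x hx y hy)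
  have hAlt : ∀ x ∈ A, ((x : ℚ) : ℝ) < sA := by
    intro x hx
    obtain ⟨y, hy, hxy⟩ := hAnomax x hx
    calc ((x : ℚ) : ℝ) < ((y : ℚ) : ℝ) := by exact_mod_cast hxy
      _ ≤ sA := le_csSup hArbdd ⟨y, hy, rfl⟩
  have hBgt : ∀ y ∈ B, sB < ((y : ℚ) : ℝ) := by
    intro y hy
    obtain ⟨x, hx, hxy⟩ := hBnomin y hy
    calc sB ≤ ((x : ℚ) : ℝ) := csInf_le hBrbdd ⟨x, hx, rfl⟩
      _ < ((y : ℚ) : ℝ) := by exact_mod_cast hxy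
  refine ⟨(sA + sB)/2, ?_, ?_, ?_, ?_, ?_⟩
  · obtain ⟨x, hx⟩ := hAne
    have h1 : (p : ℝ) < ((x : ℚ) : ℝ) := by exact_mod_cast x.2.2.1
    have := hAlt x hx
    linarith
  · obtain ⟨y, hy⟩ := hBne
    have h1 : ((y : ℚ) : ℝ) < (p' : ℝ) := by exact_mod_cast y.2.2.2
    have := hBgt y hy
    linarith
  · intro q hq hqα
    by_cases hq2 : q < p'
    · by_cases hq1 : p < q
      · rcases hAB ⟨q, hq, hq1, hq2⟩ with h | h
        · obtain ⟨y, hy, hxy⟩ := hAnomax _ h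
          refine ⟨(y : ℚ), y.2.1, by exact_mod_cast hxy, ?_⟩
          have := hAlt y hy
          linarith
        · have := hBgt _ h
          simp only at this
          linarith
      · push_neg at hq1
        obtain ⟨x, hx⟩ := hAne
        refine ⟨(x : ℚ), x.2.1, lt_of_le_of_lt hq1 x.2.2.1, ?_⟩
        have := hAlt x hx
        linarith
    · push_neg at hq2
      have : (p' : ℝ) ≤ (q : ℝ) := by exact_mod_cast hq2
      obtain ⟨y, hy⟩ := hBne
      have h1 : ((y : ℚ) : ℝ) < (p' : ℝ) := by exact_mod_cast y.2.2.2
      have := hBgt y hy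
      linarith
  · intro q hq hqα
    by_cases hq1 : p < q
    · by_cases hq2 : q < p'
      · rcases hAB ⟨q, hq, hq1, hq2⟩ with h | h
        · have := hAlt _ h
          simp only at this
          linarith
        · obtain ⟨x, hx, hxy⟩ := hBnomin _ h
          refine ⟨(x : ℚ), x.2.1, ?_, by exact_mod_cast hxy⟩
          have := hBgt x hx
          linarith
      · push_neg at hq2
        obtain ⟨y, hy⟩ := hBne
        refine ⟨(y : ℚ), y.2.1, ?_, lt_of_lt_of_le y.2.2.2 hq2⟩
        have := hBgt y hy
        linarith
    · push_neg at hq1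
      have : (q : ℝ) ≤ (p : ℝ) := by exact_mod_cast hq1
      obtain ⟨x, hx⟩ := hAne
      have h1 : (p : ℝ) < ((x : ℚ) : ℝ) := by exact_mod_cast x.2.2.1
      have := hAlt x hx
      linarith
  · intro q hq hqα
    have hq1 : p < q := by
      have : (p : ℝ) < (q : ℝ) := by
        obtain ⟨x, hx⟩ := hAne
        have h1 : (p : ℝ) < ((x : ℚ) : ℝ) := by exact_mod_cast x.2.2.1
        have := hAlt x hx
        rw [hqα]; linarith
      exact_mod_cast this
    have hq2 : q < p' := by
      have : (q : ℝ) < (p' : ℝ) := by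
        obtain ⟨y, hy⟩ := hBne
        have h1 : ((y : ℚ) : ℝ) < (p' : ℝ) := by exact_mod_cast y.2.2.2
        have := hBgt y hy
        rw [hqα]; linarith
      exact_mod_cast this
    rcases hAB ⟨q, hq, hq1, hq2⟩ with h | h
    · have := hAlt _ h
      simp only at this
      linarith
    · have := hBgt _ h
      simp only at this
      linarith

end Construction

/-- the designated irrational between two rationals -/
def xi (a b : ℚ) : ℝ := (a : ℝ) + ((b - a : ℚ) : ℝ) * (Real.sqrt 2)⁻¹

lemma one_lt_sqrt_two : (1:ℝ) < Real.sqrt 2 := by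
  nlinarith [Real.sq_sqrt (by norm_num : (2:ℝ) ≥ 0), Real.sqrt_nonneg 2]

lemma xi_irrational {a b : ℚ} (h : a < b) : Irrational (xi a b) :=
  ((irrational_sqrt_two.inv).ratCast_mul (q := b - a) (by linarith)).ratCast_add a

lemma xi_btwn {a b : ℚ} (h : a < b) : (a:ℝ) < xi a b ∧ xi a b < (b:ℝ) := by
  have h1 : (1:ℝ) < Real.sqrt 2 := one_lt_sqrt_two
  have h0 : (0:ℝ) < Real.sqrt 2 := by linarith
  have hinv1 : (Real.sqrt 2)⁻¹ < 1 := by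
    rw [inv_lt_one_iff₀]; right; exact h1
  have hinv0 : (0:ℝ) < (Real.sqrt 2)⁻¹ := by positivity
  have hba : (0:ℝ) < ((b - a : ℚ) : ℝ) := by exact_mod_cast sub_pos.2 h
  constructor
  · rw [xi]; nlinarith
  · rw [xi]
    have hcast : ((b - a : ℚ) : ℝ) = (b:ℝ) - (a:ℝ) := by push_cast; ring
    nlinarith

section Gam

variable (P : Set ℚ)

/-- density hypothesis on `P` -/
def PD : Prop := ∀ a ∈ P, ∀ b ∈ P, a < b → ∃ c ∈ P, a < c ∧ c < b

open scoped Classical in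
/-- chosen cut between two points of `P` -/
def cutC (hPd : PD P) (p p' : ℚ) : ℝ :=
  if h : p ∈ P ∧ p' ∈ P ∧ p < p' then (exists_cut hPd h.1 h.2.1 h.2.2).choose else 0

variable (hPd : PD P)

lemma cutC_spec {p p' : ℚ} (hp : p ∈ P) (hp' : p' ∈ P) (hpp : p < p') :
    (p : ℝ) < cutC P hPd p p' ∧ cutC P hPd p p' < (p' : ℝ) ∧
      (∀ q ∈ P, (q : ℝ) < cutC P hPd p p' → ∃ r ∈ P, q < r ∧ (r : ℝ) < cutC P hPd p p') ∧
      (∀ q ∈ P, cutC P hPd p p' < (q : ℝ) → ∃ r ∈ P, cutC P hPd p p' < (r : ℝ) ∧ r < q) ∧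
      (∀ q ∈ P, (q : ℝ) ≠ cutC P hPd p p') := by
  rw [cutC, dif_pos (⟨hp, hp', hpp⟩ : p ∈ P ∧ p' ∈ P ∧ p < p')]
  exact (exists_cut hPd hp hp' hpp).choose_spec

/-- the countable set of reals to be embedded into `ℚ` -/
def Zset : Set ℝ :=
  (Set.range (fun q : ℚ => (q : ℝ)) ∪ Set.range (fun ab : ℚ × ℚ => xi ab.1 ab.2)) ∪
    Set.range (fun pp : ℚ × ℚ => cutC P hPd pp.1 pp.2)

lemma Zset_countable : (Zset P hPd).Countable :=
  ((Set.countable_range _).union (Set.countable_range _)).union (Set.countable_range _)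

lemma mem_Zset_rat (q : ℚ) : ((q : ℝ)) ∈ Zset P hPd :=
  Or.inl (Or.inl ⟨q, rfl⟩)

lemma mem_Zset_xi (a b : ℚ) : xi a b ∈ Zset P hPd := Or.inl (Or.inr ⟨(a, b), rfl⟩)

lemma mem_Zset_cut (p p' : ℚ) : cutC P hPd p p' ∈ Zset P hPd := Or.inr ⟨(p, p'), rfl⟩

instance : Countable (Zset P hPd) := (Zset_countable P hPd).to_subtype

instance : Nontrivial (Set.Ioo (0:ℚ) 1) :=
  ⟨⟨⟨1/3, by norm_num⟩, ⟨1/2, by norm_num⟩, by intro h; rw [Subtype.mk_eq_mk] at h; norm_num at h⟩⟩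

/-- the global embedding -/
def eG : Zset P hPd ↪o Set.Ioo (0:ℚ) 1 :=
  (Order.embedding_from_countable_to_dense (Zset P hPd) (Set.Ioo (0:ℚ) 1)).some

/-- the map `H` -/
def Hf (z : Zset P hPd) : ℚ := (⌊(z : ℝ)⌋ : ℚ) + ((eG P hPd z : Set.Ioo (0:ℚ) 1) : ℚ)

lemma Hf_bounds (z : Zset P hPd) :
    (⌊(z : ℝ)⌋ : ℚ) < Hf P hPd z ∧ Hf P hPd z < (⌊(z : ℝ)⌋ : ℚ) + 1 := by
  obtain ⟨h1, h2⟩ := (eG P hPd z).2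
  constructor
  · rw [Hf]; linarith
  · rw [Hf]; linarith

lemma Hf_mono {z z' : Zset P hPd} (h : (z : ℝ) < (z' : ℝ)) : Hf P hPd z < Hf P hPd z' := by
  have hnn : ⌊(z : ℝ)⌋ ≤ ⌊(z' : ℝ)⌋ := Int.floor_le_floor (le_of_lt h)
  rcases lt_or_eq_of_le hnn with hlt | heq
  · have h1 := (Hf_bounds P hPd z).2
    have h2 := (Hf_bounds P hPd z').1
    have : (⌊(z : ℝ)⌋ : ℚ) + 1 ≤ (⌊(z' : ℝ)⌋ : ℚ) := by exact_mod_cast Int.add_one_le_iff.2 hlt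
    linarith
  · have hee : eG P hPd z < eG P hPd z' := (eG P hPd).strictMono (by exact_mod_cast h)
    have : ((eG P hPd z : Set.Ioo (0:ℚ) 1) : ℚ) < ((eG P hPd z' : Set.Ioo (0:ℚ) 1) : ℚ) := hee
    rw [Hf, Hf, ← heq]
    linarith

lemma Hf_lt_iff {z z' : Zset P hPd} : Hf P hPd z < Hf P hPd z' ↔ (z : ℝ) < (z' : ℝ) := by
  constructor
  · intro h
    by_contra hc
    push_neg at hc
    rcases lt_or_eq_of_le hc with h' | h'
    · exact absurd (Hf_mono P hPd h') (not_lt_of_gt h)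
    · rw [show z = z' from Subtype.ext h'.symm] at h
      exact lt_irrefl _ h
  · exact Hf_mono P hPd

lemma Hf_inj {z z' : Zset P hPd} (h : Hf P hPd z = Hf P hPd z') : (z : ℝ) = (z' : ℝ) := by
  by_contra hc
  rcases lt_or_gt_of_ne hc with h' | h'
  · exact absurd (Hf_mono P hPd h') (by rw [h]; exact lt_irrefl _)
  · exact absurd (Hf_mono P hPd h') (by rw [h]; exact lt_irrefl _)

/-- the map `γ` -/
def gam (x : ℚ) : ℚ := Hf P hPd ⟨(x : ℝ), mem_Zset_rat P hPd x⟩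

lemma gam_mono : StrictMono (gam P hPd) := fun x y h =>
  Hf_mono P hPd (show ((x:ℝ)) < ((y:ℝ)) by exact_mod_cast h)

lemma gam_lt_iff {x y : ℚ} : gam P hPd x < gam P hPd y ↔ x < y := by
  rw [gam, gam, Hf_lt_iff]
  constructor
  · intro h
    have h2 : ((x:ℝ)) < ((y:ℝ)) := h
    exact_mod_cast h2
  · intro h
    show ((x:ℝ)) < ((y:ℝ))
    exact_mod_cast h

lemma gam_bounds (x : ℚ) : x - 1 < gam P hPd x ∧ gam P hPd x < x + 1 := by
  obtain ⟨h1, h2⟩ := Hf_bounds P hPd ⟨(x : ℝ), mem_Zset_rat P hPd x⟩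
  have hf1 : (⌊(x : ℝ)⌋ : ℝ) ≤ (x : ℝ) := Int.floor_le _
  have hf2 : (x : ℝ) - 1 < (⌊(x : ℝ)⌋ : ℝ) := Int.sub_one_lt_floor _
  have hf1' : (⌊(x : ℝ)⌋ : ℚ) ≤ x := by exact_mod_cast hf1
  have hf2' : x - 1 < (⌊(x : ℝ)⌋ : ℚ) := by exact_mod_cast hf2
  exact ⟨by rw [gam]; linarith, by rw [gam]; linarith⟩

lemma nice_W1 : Nice (Set.range (gam P hPd)) := by
  constructor
  · rintro _ ⟨a, rfl⟩ _ ⟨b, rfl⟩ hab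
    have h : a < b := (gam_lt_iff P hPd).1 hab
    exact ⟨gam P hPd ((a+b)/2), ⟨(a+b)/2, rfl⟩,
      (gam_lt_iff P hPd).2 (by linarith), (gam_lt_iff P hPd).2 (by linarith)⟩
  · intro x
    refine ⟨gam P hPd (x+2), ⟨x+2, rfl⟩, ?_⟩
    have := (gam_bounds P hPd (x+2)).1
    linarith
  · intro x
    refine ⟨gam P hPd (x-2), ⟨x-2, rfl⟩, ?_⟩
    have := (gam_bounds P hPd (x-2)).2
    linarith
  · rintro _ ⟨a, rfl⟩ _ ⟨b, rfl⟩ hab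
    have h : a < b := (gam_lt_iff P hPd).1 hab
    obtain ⟨hx1, hx2⟩ := xi_btwn h
    refine ⟨Hf P hPd ⟨xi a b, mem_Zset_xi P hPd a b⟩, ?_, ?_, ?_, ?_, ?_⟩
    · rintro ⟨c, hc⟩
      have := Hf_inj P hPd hc
      exact (xi_irrational h).ne_rat c this.symm
    · exact Hf_mono P hPd hx1
    · exact Hf_mono P hPd hx2
    · rintro _ ⟨c, rfl⟩ hct
      have hcxi : ((c:ℝ)) < xi a b := (Hf_lt_iff P hPd).1 hct
      obtain ⟨r, hr1, hr2⟩ := exists_rat_btwn hcxi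
      refine ⟨gam P hPd r, ⟨r, rfl⟩, ?_, ?_⟩
      · exact (gam_lt_iff P hPd).2 (by exact_mod_cast hr1)
      · exact Hf_mono P hPd hr2
    · rintro _ ⟨c, rfl⟩ hct
      have hcxi : xi a b < ((c:ℝ)) := (Hf_lt_iff P hPd).1 hct
      obtain ⟨r, hr1, hr2⟩ := exists_rat_btwn hcxi
      refine ⟨gam P hPd r, ⟨r, rfl⟩, ?_, ?_⟩
      · exact Hf_mono P hPd hr1
      · exact (gam_lt_iff P hPd).2 (by exact_mod_cast hr2)

lemma nice_W2 (hub : ∀ x : ℚ, ∃ v ∈ P, x ≤ v) (hlb : ∀ x : ℚ, ∃ u ∈ P, u ≤ x) :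
    Nice (gam P hPd '' P) := by
  constructor
  · rintro _ ⟨p, hp, rfl⟩ _ ⟨p', hp', rfl⟩ hab
    have h : p < p' := (gam_lt_iff P hPd).1 hab
    obtain ⟨c, hc, h1, h2⟩ := hPd p hp p' hp' h
    exact ⟨gam P hPd c, ⟨c, hc, rfl⟩, (gam_lt_iff P hPd).2 h1, (gam_lt_iff P hPd).2 h2⟩
  · intro x
    obtain ⟨v, hv, hvx⟩ := hub (x+2)
    refine ⟨gam P hPd v, ⟨v, hv, rfl⟩, ?_⟩
    have := (gam_bounds P hPd v).1
    linarith
  · intro x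
    obtain ⟨u, hu, hux⟩ := hlb (x-2)
    refine ⟨gam P hPd u, ⟨u, hu, rfl⟩, ?_⟩
    have := (gam_bounds P hPd u).2
    linarith
  · rintro _ ⟨p, hp, rfl⟩ _ ⟨p', hp', rfl⟩ hab
    have h : p < p' := (gam_lt_iff P hPd).1 hab
    obtain ⟨hs1, hs2, hs3, hs4, hs5⟩ := cutC_spec P hPd hp hp' h
    refine ⟨Hf P hPd ⟨cutC P hPd p p', mem_Zset_cut P hPd p p'⟩, ?_, ?_, ?_, ?_, ?_⟩
    · rintro ⟨q, ⟨hq, hqc⟩⟩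
      exact hs5 q hq (Hf_inj P hPd hqc)
    · exact Hf_mono P hPd hs1
    · exact Hf_mono P hPd hs2
    · rintro _ ⟨q, hq, rfl⟩ hct
      have hq1 : ((q:ℝ)) < cutC P hPd p p' := (Hf_lt_iff P hPd).1 hct
      obtain ⟨r, hr, hr1, hr2⟩ := hs3 q hq hq1
      exact ⟨gam P hPd r, ⟨r, hr, rfl⟩, (gam_lt_iff P hPd).2 hr1, Hf_mono P hPd hr2⟩
    · rintro _ ⟨q, hq, rfl⟩ hct
      have hq1 : cutC P hPd p p' < ((q:ℝ)) := (Hf_lt_iff P hPd).1 hct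
      obtain ⟨r, hr, hr1, hr2⟩ := hs4 q hq hq1
      exact ⟨gam P hPd r, ⟨r, hr, rfl⟩, Hf_mono P hPd hr1, (gam_lt_iff P hPd).2 hr2⟩

end Gam

end L24

/-- **Lemma 2.4.** For any `f ∈ M` whose image is coterminal in `ℚ`, there is `g ∈ Γ`
such that `g ∘ f ∈ Γ`. -/


theorem exists_Gamma_comp_mem_Gamma (f : ℚ → ℚ) (hf : StrictMono f)
    (hcot : ∀ x : ℚ, (∃ u ∈ Set.range f, u ≤ x) ∧ (∃ v ∈ Set.range f, x ≤ v)) :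
    ∃ g : ℚ → ℚ, Gamma g ∧ Gamma (g ∘ f) := by
  classical
  set P : Set ℚ := Set.range f with hP
  have hPd : L24.PD P := by
    rintro _ ⟨u, rfl⟩ _ ⟨v, rfl⟩ huv
    have h : u < v := hf.lt_iff_lt.1 huv
    exact ⟨f ((u+v)/2), ⟨(u+v)/2, rfl⟩, hf (by linarith), hf (by linarith)⟩
  set γ : ℚ → ℚ := L24.gam P hPd with hγ
  set g : ℚ → ℚ := fun x => L24.E (L24.pt (γ x) 0) with hg
  have hgm : StrictMono g := by
    intro x y h
    exact L24.E.lt_iff_lt.2 (L24.pt_lt_pt.2 (Or.inl (L24.gam_mono P hPd h)))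
  have hr1 : Set.range g = L24.E '' (L24.V (Set.range γ)) := by
    ext y
    constructor
    · rintro ⟨x, rfl⟩
      exact ⟨L24.pt (γ x) 0, ⟨rfl, ⟨x, rfl⟩⟩, rfl⟩
    · rintro ⟨v, hv, rfl⟩
      obtain ⟨x, hx⟩ := hv.2
      refine ⟨x, ?_⟩
      show L24.E (L24.pt (γ x) 0) = L24.E v
      rw [L24.V_eq_pt hv, hx]
  have hr2 : Set.range (g ∘ f) = L24.E '' (L24.V (γ '' P)) := by
    ext y
    constructor
    · rintro ⟨x, rfl⟩
      exact ⟨L24.pt (γ (f x)) 0, ⟨rfl, ⟨f x, ⟨x, rfl⟩, rfl⟩⟩, rfl⟩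
    · rintro ⟨v, hv, rfl⟩
      obtain ⟨p, ⟨x, hx⟩, hpx⟩ := hv.2
      refine ⟨x, ?_⟩
      show L24.E (L24.pt (γ (f x)) 0) = L24.E v
      rw [L24.V_eq_pt hv, ← hpx, hx]
  have hW1 : L24.Nice (Set.range γ) := L24.nice_W1 P hPd
  have hW2 : L24.Nice (γ '' P) := by
    refine L24.nice_W2 P hPd ?_ ?_
    · intro x
      obtain ⟨v, hv, hxv⟩ := (hcot x).2
      exact ⟨v, hv, hxv⟩
    · intro x
      obtain ⟨u, hu, hux⟩ := (hcot x).1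
      exact ⟨u, hu, hux⟩
  exact ⟨g, L24.master hW1 g hgm hr1, L24.master hW2 (g ∘ f) (hgm.comp hf) hr2⟩
end
end
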